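/- arXiv:1205.1778 — 5 statements merged into one kernel-verified Lean document; each statement's English description precedes it below -/
import Mathlib

section
/- For every integer k ≥ 3 and every positive integer n, the number of permutations of length n avoiding the pattern 12⋯k equals the number of permutations of length n avoiding the pattern 12⋯(k-2)k(k-1). -/
open Function

def Contains {n k : ℕ} (p : Fin n → Fin n) (q : Fin k → Fin k) : Prop :=
  ∃ f : Fin k → Fin n, StrictMono f ∧ ∀ a b : Fin k, q a < q b ↔ p (f a) < p (f b)

def Avoids {n k : ℕ} (p : Fin n → Fin n) (q : Fin k → Fin k) : Prop :=
  ¬ Contains p q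

noncomputable def rank {n : ℕ} (p : Fin n → Fin n) (i : Fin n) : ℕ :=
  sSup {m | ∃ f : Fin m → Fin n, StrictMono f ∧ StrictMono (p ∘ f) ∧
    ∃ hm : 0 < m, f ⟨m - 1, Nat.sub_lt hm Nat.one_pos⟩ = i}

noncomputable def corank {n : ℕ} (p : Fin n → Fin n) (i : Fin n) : ℕ :=
  sSup {m | ∃ f : Fin m → Fin n, StrictMono f ∧ StrictMono (p ∘ f) ∧
    ∃ hm : 0 < m, f ⟨0, hm⟩ = i}

def Alternating {n : ℕ} (p : Fin n → Fin n) : Prop :=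
  ∀ (i : ℕ) (h : i + 1 < n), p ⟨i, by omega⟩ < p ⟨i + 1, h⟩ ↔ i % 2 = 0

def IsPeak {n : ℕ} (p : Fin n → Fin n) (i : Fin n) : Prop :=
  (∀ _ : 0 < i.1, p ⟨i.1 - 1, lt_of_le_of_lt (Nat.sub_le _ _) i.2⟩ < p i) ∧
  (∀ h : i.1 + 1 < n, p ⟨i.1 + 1, h⟩ < p i)

def IsValley {n : ℕ} (p : Fin n → Fin n) (i : Fin n) : Prop :=
  (∀ _ : 0 < i.1, p i < p ⟨i.1 - 1, lt_of_le_of_lt (Nat.sub_le _ _) i.2⟩) ∧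
  (∀ h : i.1 + 1 < n, p i < p ⟨i.1 + 1, h⟩)

namespace West

variable {n : ℕ}



variable {n : ℕ}

def mset (p : Fin n → Fin n) (r j : ℕ) : Set ℕ :=
  {v | v = n ∨ ∃ f : Fin (r+1) → Fin n, StrictMono f ∧ StrictMono (p ∘ f) ∧
    ((f (Fin.last r) : ℕ) < j ∧ ((p (f (Fin.last r))) : ℕ) = v)}

noncomputable def mm (p : Fin n → Fin n) (r j : ℕ) : ℕ := sInf (mset p r j)

lemma mm_le_n (p : Fin n → Fin n) (r j : ℕ) : mm p r j ≤ n :=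
  Nat.sInf_le (Or.inl rfl)

lemma mm_le_of_witness {p : Fin n → Fin n} {r j : ℕ} (f : Fin (r+1) → Fin n)
    (hf : StrictMono f) (hpf : StrictMono (p ∘ f)) (hpos : (f (Fin.last r) : ℕ) < j) :
    mm p r j ≤ p (f (Fin.last r)) :=
  Nat.sInf_le (Or.inr ⟨f, hf, hpf, hpos, rfl⟩)

lemma mm_attain {p : Fin n → Fin n} {r j : ℕ} (h : mm p r j < n) :
    ∃ f : Fin (r+1) → Fin n, StrictMono f ∧ StrictMono (p ∘ f) ∧
      (f (Fin.last r) : ℕ) < j ∧ ((p (f (Fin.last r))) : ℕ) = mm p r j := by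
  have hmem : mm p r j ∈ mset p r j := Nat.sInf_mem ⟨n, Or.inl rfl⟩
  rcases hmem with h' | h'
  · exact absurd h' (by omega)
  · exact h'

lemma mm_anti {p : Fin n → Fin n} {r : ℕ} {j j' : ℕ} (h : j ≤ j') :
    mm p r j' ≤ mm p r j := by
  rcases Nat.lt_or_ge (mm p r j) n with hlt | hge
  · obtain ⟨f, hf, hpf, hpos, hval⟩ := mm_attain hlt
    calc mm p r j' ≤ p (f (Fin.last r)) := mm_le_of_witness f hf hpf (by omega)
    _ = mm p r j := hval
  · have := mm_le_n p r j'; omega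

lemma mm_mono_r {p : Fin n → Fin n} {r r' j : ℕ} (h : r ≤ r') :
    mm p r j ≤ mm p r' j := by
  rcases Nat.lt_or_ge (mm p r' j) n with hlt | hge
  · obtain ⟨f, hf, hpf, hpos, hval⟩ := mm_attain hlt
    have hcast : ∀ s : Fin (r+1), s.1 < r' + 1 := fun s => by omega
    let g : Fin (r+1) → Fin n := fun s => f ⟨s.1, hcast s⟩
    have hgmono : StrictMono g := fun a b hab => hf (Fin.mk_lt_mk.mpr hab)
    have hpg : StrictMono (p ∘ g) := fun a b hab => hpf (Fin.mk_lt_mk.mpr hab)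
    have hkey : (⟨r, hcast (Fin.last r)⟩ : Fin (r'+1)) ≤ Fin.last r' := by
      simp [Fin.le_def, Fin.last]; omega
    have hle : (g (Fin.last r) : ℕ) ≤ (f (Fin.last r') : ℕ) := hf.monotone hkey
    have hvle : ((p (g (Fin.last r))) : ℕ) ≤ p (f (Fin.last r')) := hpf.monotone hkey
    calc mm p r j ≤ p (g (Fin.last r)) := mm_le_of_witness g hgmono hpg (by omega)
    _ ≤ p (f (Fin.last r')) := hvle
    _ = mm p r' j := hval
  · have := mm_le_n p r j; omega

/-- `i` is a "high" entry of `p` (can be the `(k-1)`-st element of an increasing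
subsequence). -/
noncomputable def Hi (k : ℕ) (p : Fin n → Fin n) (i : Fin n) : Prop :=
  mm p (k-3) i < (p i : ℕ)


lemma hi_iff {k : ℕ} {p : Fin n → Fin n} {i : Fin n} :
    Hi k p i ↔ mm p (k-3) i < (p i : ℕ) := Iff.rfl

/-- the entry attaining `mm p r j` (for `r ≤ k-3`) is not high -/
lemma attain_low {k : ℕ} {p : Fin n → Fin n} {r j : ℕ} (hr : r ≤ k - 3)
    {i : Fin n} (hij : (i : ℕ) < j) (hval : (p i : ℕ) = mm p r j) : ¬ Hi k p i := by
  rw [hi_iff]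
  have h1 : mm p r j ≤ mm p r i := mm_anti (by omega)
  have h2 : mm p r (i : ℕ) ≤ mm p (k-3) (i : ℕ) := mm_mono_r hr
  omega

/-- all-low witness achieving the minimum -/
lemma lowWitness {k : ℕ} {p : Fin n → Fin n} :
    ∀ (r : ℕ), r ≤ k - 3 → ∀ (j : ℕ), mm p r j < n →
    ∃ f : Fin (r+1) → Fin n, StrictMono f ∧ StrictMono (p ∘ f) ∧
      (f (Fin.last r) : ℕ) < j ∧ ((p (f (Fin.last r))) : ℕ) = mm p r j ∧
      ∀ s, ¬ Hi k p (f s) := by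
  intro r
  induction r with
  | zero =>
    intro _ j h
    obtain ⟨f, hf, hpf, hpos, hval⟩ := mm_attain h
    refine ⟨f, hf, hpf, hpos, hval, fun s => ?_⟩
    have : s = Fin.last 0 := by apply Fin.ext; have := s.isLt; simp only [Fin.last]; omega
    subst this
    exact attain_low (by omega) hpos hval
  | succ r ih =>
    intro hr j h
    obtain ⟨f, hf, hpf, hpos, hval⟩ := mm_attain h
    set i : Fin n := f (Fin.last (r+1)) with hidef
    -- the prefix of f gives an (r+1)-witness below i
    have hcast : ∀ s : Fin (r+1), s.1 < r + 2 := fun s => by omega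
    let g : Fin (r+1) → Fin n := fun s => f ⟨s.1, hcast s⟩
    have hgmono : StrictMono g := fun a b hab => hf (Fin.mk_lt_mk.mpr hab)
    have hpg : StrictMono (p ∘ g) := fun a b hab => hpf (Fin.mk_lt_mk.mpr hab)
    have hlt : (⟨r, hcast (Fin.last r)⟩ : Fin (r+2)) < Fin.last (r+1) := by
      simp [Fin.lt_def, Fin.last]
    have hgpos : (g (Fin.last r) : ℕ) < (i : ℕ) := hf hlt
    have hgval : ((p (g (Fin.last r))) : ℕ) < (p i : ℕ) := hpf hlt
    have hmlt : mm p r (i : ℕ) < (p i : ℕ) :=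
      lt_of_le_of_lt (mm_le_of_witness g hgmono hpg hgpos) hgval
    have hmn : mm p r (i : ℕ) < n := lt_of_lt_of_le hmlt (le_of_lt (p i).isLt)
    obtain ⟨f', hf', hpf', hpos', hval', hlow'⟩ := ih (by omega) (i : ℕ) hmn
    -- extend f' by i
    let F : Fin (r+2) → Fin n := fun s =>
      if hs : s.1 < r + 1 then f' ⟨s.1, hs⟩ else i
    have hFlast : F (Fin.last (r+1)) = i := by simp [F, Fin.last]
    have hFlt : ∀ s : Fin (r+2), (hs : s.1 < r+1) → F s = f' ⟨s.1, hs⟩ := by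
      intro s hs; exact dif_pos hs
    have hf'le : ∀ a : Fin (r+1), (f' a : ℕ) < (i : ℕ) := by
      intro a
      have : (f' a : ℕ) ≤ (f' (Fin.last r) : ℕ) :=
        hf'.monotone (by simp [Fin.le_def, Fin.last]; omega)
      omega
    have hpf'le : ∀ a : Fin (r+1), ((p (f' a)) : ℕ) < (p i : ℕ) := by
      intro a
      have : ((p (f' a)) : ℕ) ≤ ((p (f' (Fin.last r))) : ℕ) :=
        hpf'.monotone (by simp [Fin.le_def, Fin.last]; omega)
      omega
    have hFmono : StrictMono F := by
      intro a b hab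
      rcases Nat.lt_or_ge a.1 (r+1) with ha | ha
      · rcases Nat.lt_or_ge b.1 (r+1) with hb | hb
        · rw [hFlt a ha, hFlt b hb]
          exact hf' (Fin.mk_lt_mk.mpr hab)
        · have hb' : b = Fin.last (r+1) := by
            apply Fin.ext; simp [Fin.last]; omega
          rw [hFlt a ha, hb', hFlast, Fin.lt_def]
          exact hf'le _
      · exfalso; have := b.isLt; have : a.1 < b.1 := hab; omega
    have hpFmono : StrictMono (p ∘ F) := by
      intro a b hab
      rcases Nat.lt_or_ge a.1 (r+1) with ha | ha
      · rcases Nat.lt_or_ge b.1 (r+1) with hb | hb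
        · simp only [comp_apply]
          rw [hFlt a ha, hFlt b hb]
          exact hpf' (Fin.mk_lt_mk.mpr hab)
        · have hb' : b = Fin.last (r+1) := by
            apply Fin.ext; simp [Fin.last]; omega
          simp only [comp_apply]
          rw [hFlt a ha, hb', hFlast, Fin.lt_def]
          exact hpf'le _
      · exfalso; have := b.isLt; have : a.1 < b.1 := hab; omega
    refine ⟨F, hFmono, hpFmono, ?_, ?_, ?_⟩
    · rw [hFlast]; omega
    · rw [hFlast]; exact hval
    · intro s
      rcases Nat.lt_or_ge s.1 (r+1) with hs | hs
      · rw [hFlt s hs]; exact hlow' _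
      · have hs' : s = Fin.last (r+1) := by apply Fin.ext; simp [Fin.last]; omega
        rw [hs', hFlast]
        exact attain_low (by omega) hpos hval

/-- transfer: if `p` agrees with `q` on all non-high entries of `q`,
then `mm p ≤ mm q`. -/
lemma mm_le_of_agree_low {k : ℕ} {p q : Fin n → Fin n}
    (hlow : ∀ i : Fin n, ¬ Hi k q i → p i = q i) {r : ℕ} (hr : r ≤ k - 3) (j : ℕ) :
    mm p r j ≤ mm q r j := by
  rcases Nat.lt_or_ge (mm q r j) n with hlt | hge
  · obtain ⟨f, hf, hqf, hpos, hval, hlowf⟩ := lowWitness (k := k) r hr j hlt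
    have hagree : ∀ s, p (f s) = q (f s) := fun s => hlow _ (hlowf s)
    have hpf : StrictMono (p ∘ f) := by
      have : p ∘ f = q ∘ f := funext fun s => hagree s
      rw [this]; exact hqf
    calc mm p r j ≤ p (f (Fin.last r)) := mm_le_of_witness f hf hpf hpos
    _ = (q (f (Fin.last r)) : ℕ) := by rw [hagree]
    _ = mm q r j := hval
  · have := mm_le_n p r j; omega

/-- invariance of `mm` for permutations with identical high sets and low values -/
lemma mm_eq_of_same_data {k : ℕ} {p q : Fin n → Fin n}
    (hHi : ∀ i : Fin n, Hi k p i ↔ Hi k q i)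
    (hlow : ∀ i : Fin n, ¬ Hi k p i → p i = q i) {r : ℕ} (hr : r ≤ k - 3) (j : ℕ) :
    mm p r j = mm q r j := by
  refine le_antisymm ?_ ?_
  · exact mm_le_of_agree_low (fun i hi => hlow i (fun h => hi ((hHi i).mp h))) hr j
  · exact mm_le_of_agree_low (fun i hi => (hlow i hi).symm) hr j

/-- key invariance: a "valid fill" of the data of `q` has the same `mm` and the
same high set as `q`. -/
lemma mm_eq_of_fill {k : ℕ} {p q : Fin n → Fin n}
    (h1 : ∀ i : Fin n, ¬ Hi k q i → p i = q i)
    (h2 : ∀ i : Fin n, Hi k q i → mm q (k-3) i < (p i : ℕ)) :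
    ∀ (j : ℕ) {r : ℕ}, r ≤ k - 3 → mm p r j = mm q r j := by
  intro j
  induction j using Nat.strong_induction_on with
  | _ j ih =>
    intro r hr
    refine le_antisymm (mm_le_of_agree_low h1 hr j) ?_
    rcases Nat.lt_or_ge (mm p r j) n with hlt | hge
    · obtain ⟨f, hf, hpf, hpos, hval, hlowf⟩ := lowWitness (k := k) r hr j hlt
      have hagree : ∀ s, p (f s) = q (f s) := by
        intro s
        by_cases hq : Hi k q (f s)
        · exfalso
          apply hlowf s
          rw [hi_iff]
          have hpos' : (f s : ℕ) < j := by
            have : (f s : ℕ) ≤ (f (Fin.last r) : ℕ) :=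
              hf.monotone (by simp [Fin.le_def, Fin.last]; omega)
            omega
          have := h2 _ hq
          have heq := ih (f s : ℕ) hpos' (le_refl (k-3))
          omega
        · exact h1 _ hq
      have hqf : StrictMono (q ∘ f) := by
        have : q ∘ f = p ∘ f := funext fun s => (hagree s).symm
        rw [this]; exact hpf
      calc mm q r j ≤ q (f (Fin.last r)) := mm_le_of_witness f hf hqf hpos
      _ = (p (f (Fin.last r)) : ℕ) := by rw [hagree]
      _ = mm p r j := hval
    · have := mm_le_n q r j; omega

lemma hi_iff_of_fill {k : ℕ} {p q : Fin n → Fin n}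
    (h1 : ∀ i : Fin n, ¬ Hi k q i → p i = q i)
    (h2 : ∀ i : Fin n, Hi k q i → mm q (k-3) i < (p i : ℕ)) (i : Fin n) :
    Hi k p i ↔ Hi k q i := by
  have heq := mm_eq_of_fill h1 h2 (i : ℕ) (le_refl (k-3))
  constructor
  · intro hp
    by_contra hq
    have hv := h1 i hq
    rw [hi_iff] at hp
    exact hq (by rw [hi_iff, ← heq, ← hv]; exact hp)
  · intro hq
    rw [hi_iff]
    rw [heq]
    exact h2 i hq

lemma km2 (hk : 3 ≤ k) : k - 3 + 1 = k - 2 := by omega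

lemma containsA_iff {k : ℕ} (hk : 3 ≤ k) (p : Fin n → Fin n) :
    Contains p (id : Fin k → Fin k) ↔
    ∃ j l : Fin n, (j : ℕ) < (l : ℕ) ∧ mm p (k-3) j < (p j : ℕ) ∧ (p j : ℕ) < (p l : ℕ) := by
  constructor
  · rintro ⟨f, hf, hiff⟩
    have hpf : StrictMono (p ∘ f) := fun a b h => (hiff a b).mp h
    obtain ⟨a3, ha3⟩ : ∃ a : Fin k, a.1 = k-3 := ⟨⟨k-3, by omega⟩, rfl⟩
    obtain ⟨a2, ha2⟩ : ∃ a : Fin k, a.1 = k-2 := ⟨⟨k-2, by omega⟩, rfl⟩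
    obtain ⟨a1, ha1⟩ : ∃ a : Fin k, a.1 = k-1 := ⟨⟨k-1, by omega⟩, rfl⟩
    have h32 : a3 < a2 := Fin.lt_def.mpr (by omega)
    have h21 : a2 < a1 := Fin.lt_def.mpr (by omega)
    refine ⟨f a2, f a1, Fin.lt_def.mp (hf h21), ?_, Fin.lt_def.mp (hpf h21)⟩
    have hcast : ∀ s : Fin (k-3+1), s.1 < k := fun s => by have := s.isLt; omega
    let g : Fin (k-3+1) → Fin n := fun s => f ⟨s.1, hcast s⟩
    have hg : StrictMono g := fun a b hab => hf (Fin.mk_lt_mk.mpr hab)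
    have hpg : StrictMono (p ∘ g) := fun a b hab => hpf (Fin.mk_lt_mk.mpr hab)
    have hgl : g (Fin.last (k-3)) = f a3 := by
      show f _ = f a3
      congr 1
      apply Fin.ext
      simp [Fin.last, ha3]
    have hpos : (g (Fin.last (k-3)) : ℕ) < ((f a2 : Fin n) : ℕ) := by
      rw [hgl]; exact Fin.lt_def.mp (hf h32)
    have h1 : mm p (k-3) ((f a2 : Fin n) : ℕ) ≤ (p (g (Fin.last (k-3))) : ℕ) :=
      mm_le_of_witness g hg hpg hpos
    have h2 : (p (g (Fin.last (k-3))) : ℕ) < (p (f a2) : ℕ) := by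
      rw [hgl]; exact Fin.lt_def.mp (hpf h32)
    omega
  · rintro ⟨j, l, hjl, hm, hjlv⟩
    have hmn : mm p (k-3) (j : ℕ) < n := lt_of_lt_of_le hm (le_of_lt (p j).isLt)
    obtain ⟨g, hg, hpg, hgpos, hgval⟩ := mm_attain hmn
    have hgtop : ∀ s : Fin (k-3+1), (p (g s) : ℕ) ≤ mm p (k-3) (j : ℕ) := by
      intro s
      have : (p (g s) : ℕ) ≤ (p (g (Fin.last (k-3))) : ℕ) :=
        hpg.monotone (by simp [Fin.le_def, Fin.last]; omega)
      omega
    have hgpos' : ∀ s : Fin (k-3+1), (g s : ℕ) < (j : ℕ) := by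
      intro s
      have : (g s : ℕ) ≤ (g (Fin.last (k-3)) : ℕ) :=
        hg.monotone (by simp [Fin.le_def, Fin.last]; omega)
      omega
    let f : Fin k → Fin n := fun s =>
      if hs : s.1 < k-2 then g ⟨s.1, by omega⟩ else if s.1 = k-2 then j else l
    have hfs : ∀ (s : Fin k) (hs : s.1 < k-2), f s = g ⟨s.1, by omega⟩ := by
      intro s hs; simp [f, hs]
    have hfj : ∀ (s : Fin k), s.1 = k-2 → f s = j := by
      intro s hs; simp [f, hs]
    have hfl : ∀ (s : Fin k), s.1 = k-1 → f s = l := by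
      intro s hs
      have h1 : ¬ (s.1 < k-2) := by omega
      have h2 : ¬ (s.1 = k-2) := by omega
      simp [f, h1, h2]
    have key : ∀ a b : Fin k, a.1 < b.1 → ((f a : ℕ) < (f b : ℕ) ∧ (p (f a) : ℕ) < (p (f b) : ℕ)) := by
      intro a b hab
      have hbk := b.isLt
      by_cases hb2 : b.1 < k-2
      · have ha2 : a.1 < k-2 := by omega
        rw [hfs a ha2, hfs b hb2]
        exact ⟨hg (Fin.mk_lt_mk.mpr hab), hpg (Fin.mk_lt_mk.mpr hab)⟩
      · by_cases hb1 : b.1 = k-2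
        · rw [hfj b hb1]
          have ha2 : a.1 < k-2 := by omega
          rw [hfs a ha2]
          exact ⟨hgpos' _, by have := hgtop ⟨a.1, by omega⟩; omega⟩
        · have hb1' : b.1 = k-1 := by omega
          rw [hfl b hb1']
          by_cases ha2 : a.1 < k-2
          · rw [hfs a ha2]
            refine ⟨by have := hgpos' (⟨a.1, by omega⟩ : Fin (k-3+1)); omega, ?_⟩
            have := hgtop ⟨a.1, by omega⟩; omega
          · have ha1 : a.1 = k-2 := by omega
            rw [hfj a ha1]
            exact ⟨hjl, hjlv⟩
    have hfmono : StrictMono f := fun a b hab => Fin.lt_def.mpr (key a b hab).1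
    refine ⟨f, hfmono, fun a b => ?_⟩
    simp only [id_eq]
    constructor
    · intro hab; exact Fin.lt_def.mpr (key a b hab).2
    · intro hab
      rcases lt_trichotomy a b with h | h | h
      · exact h
      · subst h; exact absurd hab (lt_irrefl _)
      · exact absurd (Fin.lt_def.mpr (key b a h).2) (asymm hab)

lemma swapval {k : ℕ} (hk : 3 ≤ k) (h2k : k-2 < k) (h1k : k-1 < k) (a : Fin k) :
    (((Equiv.swap (⟨k-2, h2k⟩ : Fin k) ⟨k-1, h1k⟩) a : Fin k) : ℕ)
      = if (a : ℕ) = k-2 then k-1 else if (a : ℕ) = k-1 then k-2 else (a : ℕ) := by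
  by_cases h2 : (a : ℕ) = k-2
  · have ha : a = ⟨k-2, h2k⟩ := Fin.ext h2
    rw [ha, Equiv.swap_apply_left]
    simp only [Fin.val_mk]
    split_ifs <;> omega
  · by_cases h1 : (a : ℕ) = k-1
    · have ha : a = ⟨k-1, h1k⟩ := Fin.ext h1
      rw [ha, Equiv.swap_apply_right]
      simp only [Fin.val_mk]
      split_ifs <;> omega
    · rw [Equiv.swap_apply_of_ne_of_ne (Fin.ne_of_val_ne (by simpa using h2))
        (Fin.ne_of_val_ne (by simpa using h1))]
      split_ifs <;> omega

lemma containsB_iff {k : ℕ} (hk : 3 ≤ k) (h2k : k-2 < k) (h1k : k-1 < k) (p : Fin n → Fin n) :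
    Contains p ⇑(Equiv.swap (⟨k-2, h2k⟩ : Fin k) ⟨k-1, h1k⟩) ↔
    ∃ j l : Fin n, (j : ℕ) < (l : ℕ) ∧ mm p (k-3) j < (p l : ℕ) ∧ (p l : ℕ) < (p j : ℕ) := by
  constructor
  · rintro ⟨f, hf, hiff⟩
    obtain ⟨a3, ha3⟩ : ∃ a : Fin k, (a : ℕ) = k-3 := ⟨⟨k-3, by omega⟩, rfl⟩
    obtain ⟨b2, hb2⟩ : ∃ a : Fin k, (a : ℕ) = k-2 := ⟨⟨k-2, by omega⟩, rfl⟩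
    obtain ⟨b1, hb1⟩ : ∃ a : Fin k, (a : ℕ) = k-1 := ⟨⟨k-1, by omega⟩, rfl⟩
    have hlt : ∀ a b : Fin k,
        (if (a : ℕ) = k-2 then k-1 else if (a : ℕ) = k-1 then k-2 else (a : ℕ)) <
        (if (b : ℕ) = k-2 then k-1 else if (b : ℕ) = k-1 then k-2 else (b : ℕ)) →
        p (f a) < p (f b) := by
      intro a b h
      refine (hiff a b).mp (Fin.lt_def.mpr ?_)
      rw [swapval hk h2k h1k, swapval hk h2k h1k]
      exact h
    refine ⟨f b2, f b1, Fin.lt_def.mp (hf (Fin.lt_def.mpr (by omega))), ?_, ?_⟩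
    · -- mm p (k-3) (f b2) < p (f b1)
      have hcast : ∀ s : Fin (k-3+1), (s : ℕ) < k := fun s => by have := s.isLt; omega
      let g : Fin (k-3+1) → Fin n := fun s => f ⟨s.1, hcast s⟩
      have hg : StrictMono g := fun a b hab => hf (Fin.mk_lt_mk.mpr hab)
      have hpg : StrictMono (p ∘ g) := by
        intro a b hab
        have ha' := a.isLt
        have hb' := b.isLt
        have hab' : (a : ℕ) < (b : ℕ) := hab
        exact hlt ⟨a.1, hcast a⟩ ⟨b.1, hcast b⟩ (by simp only [Fin.val_mk]; split_ifs <;> omega)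
      have hgl : g (Fin.last (k-3)) = f a3 := by
        show f _ = f a3
        congr 1
        apply Fin.ext
        simp [Fin.last, ha3]
      have hpos : (g (Fin.last (k-3)) : ℕ) < ((f b2 : Fin n) : ℕ) := by
        rw [hgl]
        exact Fin.lt_def.mp (hf (Fin.lt_def.mpr (by omega)))
      have h1 : mm p (k-3) ((f b2 : Fin n) : ℕ) ≤ (p (g (Fin.last (k-3))) : ℕ) :=
        mm_le_of_witness g hg hpg hpos
      have h2 : (p (g (Fin.last (k-3))) : ℕ) < (p (f b1) : ℕ) := by
        rw [hgl]
        exact Fin.lt_def.mp (hlt a3 b1 (by split_ifs <;> omega))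
      omega
    · exact Fin.lt_def.mp (hlt b1 b2 (by split_ifs <;> omega))
  · rintro ⟨j, l, hjl, hm, hlj⟩
    have hmn : mm p (k-3) (j : ℕ) < n := by have := (p l).isLt; omega
    obtain ⟨g, hg, hpg, hgpos, hgval⟩ := mm_attain hmn
    have hgtop : ∀ s : Fin (k-3+1), (p (g s) : ℕ) ≤ mm p (k-3) (j : ℕ) := by
      intro s
      have : (p (g s) : ℕ) ≤ (p (g (Fin.last (k-3))) : ℕ) :=
        hpg.monotone (by simp [Fin.le_def, Fin.last]; omega)
      omega
    have hgpos' : ∀ s : Fin (k-3+1), (g s : ℕ) < (j : ℕ) := by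
      intro s
      have : (g s : ℕ) ≤ (g (Fin.last (k-3)) : ℕ) :=
        hg.monotone (by simp [Fin.le_def, Fin.last]; omega)
      omega
    let f : Fin k → Fin n := fun s =>
      if hs : s.1 < k-2 then g ⟨s.1, by omega⟩ else if s.1 = k-2 then j else l
    have hfs : ∀ (s : Fin k) (hs : s.1 < k-2), f s = g ⟨s.1, by omega⟩ := by
      intro s hs; simp [f, hs]
    have hfj : ∀ (s : Fin k), s.1 = k-2 → f s = j := by
      intro s hs; simp [f, hs]
    have hfl : ∀ (s : Fin k), s.1 = k-1 → f s = l := by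
      intro s hs
      have h1 : ¬ (s.1 < k-2) := by omega
      have h2 : ¬ (s.1 = k-2) := by omega
      simp [f, h1, h2]
    have keypos : ∀ a b : Fin k, a.1 < b.1 → (f a : ℕ) < (f b : ℕ) := by
      intro a b hab
      have hbk := b.isLt
      by_cases hb2' : b.1 < k-2
      · have ha2 : a.1 < k-2 := by omega
        rw [hfs a ha2, hfs b hb2']
        exact Fin.lt_def.mp (hg (Fin.mk_lt_mk.mpr hab))
      · by_cases hb1' : b.1 = k-2
        · rw [hfj b hb1']
          have ha2 : a.1 < k-2 := by omega
          rw [hfs a ha2]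
          exact hgpos' _
        · have hb1'' : b.1 = k-1 := by omega
          rw [hfl b hb1'']
          by_cases ha2 : a.1 < k-2
          · rw [hfs a ha2]
            have := hgpos' (⟨a.1, by omega⟩ : Fin (k-3+1))
            omega
          · have ha1 : a.1 = k-2 := by omega
            rw [hfj a ha1]
            exact hjl
    have hfmono : StrictMono f := fun a b hab => Fin.lt_def.mpr (keypos a b hab)
    have hval : ∀ a : Fin k, (ha : a.1 < k-2) → (p (f a) : ℕ) ≤ mm p (k-3) (j : ℕ) := by
      intro a ha
      rw [hfs a ha]
      exact hgtop _
    have hvmono : ∀ a b : Fin k, a.1 < b.1 → b.1 < k-2 → (p (f a) : ℕ) < (p (f b) : ℕ) := by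
      intro a b hab hb
      have ha : a.1 < k-2 := by omega
      rw [hfs a ha, hfs b hb]
      exact Fin.lt_def.mp (hpg (Fin.mk_lt_mk.mpr hab))
    refine ⟨f, hfmono, ?_⟩
    intro a b
    have hak := a.isLt
    have hbk := b.isLt
    rw [Fin.lt_def, swapval hk h2k h1k, swapval hk h2k h1k, Fin.lt_def]
    by_cases ha2 : a.1 < k-2
    · by_cases hb2' : b.1 < k-2
      · rw [if_neg (by omega), if_neg (by omega), if_neg (by omega), if_neg (by omega)]
        constructor
        · intro hab
          exact hvmono a b hab hb2'
        · intro hab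
          rcases lt_trichotomy a.1 b.1 with h | h | h
          · exact h
          · exfalso
            have : a = b := Fin.ext h
            subst this
            omega
          · exact absurd (hvmono b a h ha2) (by omega)
      · have hva := hval a ha2
        by_cases hb1' : b.1 = k-2
        · rw [if_neg (by omega), if_neg (by omega), if_pos hb1', hfj b hb1']
          exact iff_of_true (by omega) (by omega)
        · have hb1'' : b.1 = k-1 := by omega
          rw [if_neg (by omega), if_neg (by omega), if_neg (by omega), if_pos hb1'', hfl b hb1'']
          exact iff_of_true (by omega) (by omega)
    · by_cases ha1 : a.1 = k-2
      · rw [if_pos ha1, hfj a ha1]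
        by_cases hb2' : b.1 < k-2
        · have hvb := hval b hb2'
          rw [if_neg (by omega), if_neg (by omega), hfs b hb2']
          exact iff_of_false (by omega) (by rw [hfs b hb2'] at hvb; omega)
        · by_cases hb1' : b.1 = k-2
          · have : b = a := Fin.ext (by omega)
            subst this
            rw [if_pos hb1', hfj b hb1']
            exact iff_of_false (by omega) (by omega)
          · have hb1'' : b.1 = k-1 := by omega
            rw [if_neg (by omega), if_pos hb1'', hfl b hb1'']
            exact iff_of_false (by omega) (by omega)
      · have ha1' : a.1 = k-1 := by omega
        rw [if_neg ha1, if_pos ha1', hfl a ha1']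
        by_cases hb2' : b.1 < k-2
        · have hvb := hval b hb2'
          rw [if_neg (by omega), if_neg (by omega), hfs b hb2']
          exact iff_of_false (by omega) (by rw [hfs b hb2'] at hvb; omega)
        · by_cases hb1' : b.1 = k-2
          · rw [if_pos hb1', hfj b hb1']
            exact iff_of_true (by omega) (by omega)
          · have hb1'' : b.1 = k-1 := by omega
            have : b = a := Fin.ext (by omega)
            subst this
            rw [if_neg hb1', if_pos hb1'', hfl b hb1'']
            exact iff_of_false (by omega) (by omega)

lemma first_diff {p q : Fin n → Fin n} (hne : p ≠ q) :
    ∃ j : Fin n, p j ≠ q j ∧ ∀ i : Fin n, (i : ℕ) < (j : ℕ) → p i = q i := by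
  classical
  let D : Finset (Fin n) := Finset.univ.filter (fun i : Fin n => p i ≠ q i)
  have hD : D.Nonempty := by
    obtain ⟨j, hj⟩ := Function.ne_iff.mp hne
    exact ⟨j, by simp [D, hj]⟩
  have hjmem := D.min'_mem hD
  refine ⟨D.min' hD, (Finset.mem_filter.mp hjmem).2, fun i hi => ?_⟩
  by_contra hne'
  have : D.min' hD ≤ i := D.min'_le i (Finset.mem_filter.mpr ⟨Finset.mem_univ _, hne'⟩)
  rw [Fin.le_def] at this
  omega

lemma find_later {p q : Fin n → Fin n} (hp : Bijective p) (hq : Injective q)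
    {j : Fin n} (hne : p j ≠ q j) (hagree : ∀ i : Fin n, (i : ℕ) < (j : ℕ) → p i = q i) :
    ∃ l : Fin n, (j : ℕ) < (l : ℕ) ∧ p l = q j := by
  obtain ⟨l, hl⟩ := hp.2 (q j)
  refine ⟨l, ?_, hl⟩
  rcases lt_trichotomy (l : ℕ) (j : ℕ) with h | h | h
  · exfalso
    have h1 : p l = q l := hagree l h
    have : l = j := hq (h1 ▸ hl)
    omega
  · exfalso
    have : l = j := Fin.ext h
    subst this
    exact hne hl
  · exact h

lemma uniqA {k : ℕ} {p q : Fin n → Fin n} (hp : Bijective p) (hq : Bijective q)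
    (hHi : ∀ i, Hi k p i ↔ Hi k q i) (hlow : ∀ i, ¬ Hi k p i → p i = q i)
    (hApat : ∀ j l : Fin n, (j:ℕ) < (l:ℕ) → mm p (k-3) j < (p j:ℕ) → (p j:ℕ) < (p l:ℕ) → False)
    (hAq : ∀ j l : Fin n, (j:ℕ) < (l:ℕ) → mm q (k-3) j < (q j:ℕ) → (q j:ℕ) < (q l:ℕ) → False) :
    p = q := by
  by_contra hne
  obtain ⟨j, hnej, hagree⟩ := first_diff hne
  have hmm : ∀ x : ℕ, mm p (k-3) x = mm q (k-3) x :=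
    fun x => mm_eq_of_same_data hHi hlow (le_refl _) x
  have hHipj : Hi k p j := by
    by_contra h
    exact hnej (hlow j h)
  have hvne : (p j : ℕ) ≠ (q j : ℕ) := fun h => hnej (Fin.ext h)
  rcases lt_or_gt_of_ne hvne with hc | hc
  · -- p j < q j : find l with p l = q j, violation in p
    obtain ⟨l, hjl, hl⟩ := find_later hp hq.1 hnej hagree
    refine hApat j l hjl hHipj ?_
    rw [hl]; exact hc
  · -- q j < p j : violation in q
    have hnej' : q j ≠ p j := fun h => hnej h.symm
    have hagree' : ∀ i : Fin n, (i : ℕ) < (j : ℕ) → q i = p i := fun i hi => (hagree i hi).symm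
    obtain ⟨l, hjl, hl⟩ := find_later hq hp.1 hnej' hagree'
    have hHiqj : Hi k q j := (hHi j).mp hHipj
    refine hAq j l hjl hHiqj ?_
    rw [hl]; exact hc
  
lemma uniqB {k : ℕ} {p q : Fin n → Fin n} (hp : Bijective p) (hq : Bijective q)
    (hHi : ∀ i, Hi k p i ↔ Hi k q i) (hlow : ∀ i, ¬ Hi k p i → p i = q i)
    (hBpat : ∀ j l : Fin n, (j:ℕ) < (l:ℕ) → mm p (k-3) j < (p l:ℕ) → (p l:ℕ) < (p j:ℕ) → False)
    (hBq : ∀ j l : Fin n, (j:ℕ) < (l:ℕ) → mm q (k-3) j < (q l:ℕ) → (q l:ℕ) < (q j:ℕ) → False) :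
    p = q := by
  by_contra hne
  obtain ⟨j, hnej, hagree⟩ := first_diff hne
  have hmm : ∀ x : ℕ, mm p (k-3) x = mm q (k-3) x :=
    fun x => mm_eq_of_same_data hHi hlow (le_refl _) x
  have hHipj : Hi k p j := by
    by_contra h
    exact hnej (hlow j h)
  have hHiqj : Hi k q j := (hHi j).mp hHipj
  have hvne : (p j : ℕ) ≠ (q j : ℕ) := fun h => hnej (Fin.ext h)
  rcases lt_or_gt_of_ne hvne with hc | hc
  · -- p j < q j : find l with q l = p j, violation in q
    have hnej' : q j ≠ p j := fun h => hnej h.symm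
    have hagree' : ∀ i : Fin n, (i : ℕ) < (j : ℕ) → q i = p i := fun i hi => (hagree i hi).symm
    obtain ⟨l, hjl, hl⟩ := find_later hq hp.1 hnej' hagree'
    refine hBq j l hjl ?_ ?_
    · rw [hl]
      have := hi_iff.mp hHipj
      have := hmm (j : ℕ)
      omega
    · rw [hl]; exact hc
  · -- q j < p j : violation in p
    obtain ⟨l, hjl, hl⟩ := find_later hp hq.1 hnej hagree
    refine hBpat j l hjl ?_ ?_
    · rw [hl]
      have := hi_iff.mp hHiqj
      have := hmm (j : ℕ)
      omega
    · rw [hl]; exact hc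

noncomputable def msr (p : Fin n → Fin n) : ℕ := ∑ i : Fin n, (p i : ℕ) * (i : ℕ)

lemma sum_split (j l : Fin n) (hne : j ≠ l) (h : Fin n → ℕ) :
    ∑ i : Fin n, h i = h j + h l + ∑ i ∈ (Finset.univ.erase j).erase l, h i := by
  have h1 : ∑ i ∈ Finset.univ.erase j, h i + h j = ∑ i : Fin n, h i :=
    Finset.sum_erase_add _ _ (Finset.mem_univ j)
  have h2 : ∑ i ∈ (Finset.univ.erase j).erase l, h i + h l = ∑ i ∈ Finset.univ.erase j, h i :=
    Finset.sum_erase_add _ _ (Finset.mem_erase.mpr ⟨hne.symm, Finset.mem_univ l⟩)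
  omega

lemma msr_swap {p : Fin n → Fin n} {j l : Fin n} (hjl : (j : ℕ) < (l : ℕ))
    (hv : (p l : ℕ) < (p j : ℕ)) :
    msr p < msr (p ∘ ⇑(Equiv.swap j l)) := by
  have hne : j ≠ l := Fin.ne_of_val_ne (by omega)
  have hre : msr (p ∘ ⇑(Equiv.swap j l)) = ∑ i : Fin n, (p i : ℕ) * ((Equiv.swap j l i : Fin n) : ℕ) := by
    refine Fintype.sum_equiv (Equiv.swap j l) _ _ ?_
    intro x
    simp [Equiv.swap_apply_self]
  rw [msr, hre, sum_split j l hne (fun i => (p i : ℕ) * (i : ℕ)),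
    sum_split j l hne (fun i => (p i : ℕ) * ((Equiv.swap j l i : Fin n) : ℕ))]
  have hrest : ∑ i ∈ (Finset.univ.erase j).erase l, (p i : ℕ) * (i : ℕ)
      = ∑ i ∈ (Finset.univ.erase j).erase l, (p i : ℕ) * ((Equiv.swap j l i : Fin n) : ℕ) := by
    refine Finset.sum_congr rfl ?_
    intro i hi
    have hij : i ≠ j := (Finset.mem_erase.mp (Finset.mem_of_mem_erase hi)).1
    have hil : i ≠ l := (Finset.mem_erase.mp hi).1
    rw [Equiv.swap_apply_of_ne_of_ne hij hil]
  rw [← hrest]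
  have e1 : ((Equiv.swap j l j : Fin n) : ℕ) = (l : ℕ) := by rw [Equiv.swap_apply_left]
  have e2 : ((Equiv.swap j l l : Fin n) : ℕ) = (j : ℕ) := by rw [Equiv.swap_apply_right]
  rw [e1, e2]
  have hkey : (p j : ℕ) * (j : ℕ) + (p l : ℕ) * (l : ℕ) <
      (p j : ℕ) * (l : ℕ) + (p l : ℕ) * (j : ℕ) := by nlinarith
  omega

/-- the set of valid fills of the data of `q` -/
def Sdata (k : ℕ) (q : Fin n → Fin n) : Set (Fin n → Fin n) :=
  {p | Bijective p ∧ ∀ i, (¬ Hi k q i → p i = q i) ∧ (Hi k q i → mm q (k-3) i < (p i : ℕ))}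

lemma swap_mem_Sdata {k : ℕ} {q p : Fin n → Fin n} (hpS : p ∈ Sdata k q) {j l : Fin n}
    (hjl : j ≠ l)
    (hHj : Hi k q j) (hHl : Hi k q l)
    (h1 : mm q (k-3) j < (p l : ℕ)) (h2 : mm q (k-3) l < (p j : ℕ)) :
    (p ∘ ⇑(Equiv.swap j l)) ∈ Sdata k q := by
  obtain ⟨hbij, hfill⟩ := hpS
  refine ⟨hbij.comp (Equiv.bijective _), fun i => ?_⟩
  by_cases hij : i = j
  · subst hij
    have : (p ∘ ⇑(Equiv.swap i l)) i = p l := by simp [Equiv.swap_apply_left]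
    rw [this]
    exact ⟨fun h => absurd hHj h, fun _ => h1⟩
  · by_cases hil : i = l
    · subst hil
      have : (p ∘ ⇑(Equiv.swap j i)) i = p j := by simp [Equiv.swap_apply_right]
      rw [this]
      exact ⟨fun h => absurd hHl h, fun _ => h2⟩
    · have : (p ∘ ⇑(Equiv.swap j l)) i = p i := by simp [Equiv.swap_apply_of_ne_of_ne hij hil]
      rw [this]
      exact hfill i

lemma comp_swap_swap (p : Fin n → Fin n) (j l : Fin n) :
    (p ∘ ⇑(Equiv.swap j l)) ∘ ⇑(Equiv.swap j l) = p := by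
  funext i
  simp [Equiv.swap_apply_self]

lemma q_mem_Sdata {k : ℕ} {q : Fin n → Fin n} (hq : Bijective q) : q ∈ Sdata k q :=
  ⟨hq, fun i => ⟨fun _ => rfl, fun h => h⟩⟩

lemma exists_Afill {k : ℕ} {q : Fin n → Fin n} (hq : Bijective q) :
    ∃ p : Fin n → Fin n, Bijective p ∧ (∀ i, Hi k p i ↔ Hi k q i) ∧
      (∀ i, ¬ Hi k p i → p i = q i) ∧
      (∀ j l : Fin n, (j:ℕ) < (l:ℕ) → mm p (k-3) j < (p j:ℕ) → (p j:ℕ) < (p l:ℕ) → False) := by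
  classical
  have : Nonempty ↥(Sdata k q) := ⟨⟨q, q_mem_Sdata hq⟩⟩
  obtain ⟨⟨p, hpS⟩, hmin⟩ := Finite.exists_min (fun x : ↥(Sdata k q) => msr x.1)
  obtain ⟨hpbij, hfill⟩ := hpS
  have hmm : ∀ x : ℕ, mm p (k-3) x = mm q (k-3) x :=
    fun x => mm_eq_of_fill (fun i => (hfill i).1) (fun i => (hfill i).2) x (le_refl _)
  have hhi : ∀ i, Hi k p i ↔ Hi k q i :=
    hi_iff_of_fill (fun i => (hfill i).1) (fun i => (hfill i).2)
  refine ⟨p, hpbij, hhi, fun i hi => (hfill i).1 (fun h => hi ((hhi i).mpr h)), ?_⟩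
  intro j l hjl h1 h2
  have hjlne : j ≠ l := Fin.ne_of_val_ne (by omega)
  have hHpj : Hi k p j := h1
  have hHpl : Hi k p l := by
    rw [hi_iff]
    have : mm p (k-3) (l : ℕ) ≤ mm p (k-3) (j : ℕ) := mm_anti (by omega)
    omega
  have hS' : (p ∘ ⇑(Equiv.swap j l)) ∈ Sdata k q := by
    refine swap_mem_Sdata ⟨hpbij, hfill⟩ hjlne ((hhi j).mp hHpj) ((hhi l).mp hHpl) ?_ ?_
    · rw [← hmm]; omega
    · have : mm q (k-3) (l : ℕ) ≤ mm q (k-3) (j : ℕ) := mm_anti (by omega)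
      simp only [← hmm] at this ⊢
      omega
  -- swapping decreases the measure: apply msr_swap to p' := p ∘ swap
  have hvals : ((p ∘ ⇑(Equiv.swap j l)) l : ℕ) < ((p ∘ ⇑(Equiv.swap j l)) j : ℕ) := by
    simp [Equiv.swap_apply_left, Equiv.swap_apply_right]
    omega
  have hlt : msr (p ∘ ⇑(Equiv.swap j l)) < msr p := by
    have := msr_swap hjl hvals
    rwa [comp_swap_swap] at this
  exact absurd (hmin ⟨_, hS'⟩) (not_le.mpr hlt)

lemma exists_Bfill {k : ℕ} {q : Fin n → Fin n} (hq : Bijective q) :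
    ∃ p : Fin n → Fin n, Bijective p ∧ (∀ i, Hi k p i ↔ Hi k q i) ∧
      (∀ i, ¬ Hi k p i → p i = q i) ∧
      (∀ j l : Fin n, (j:ℕ) < (l:ℕ) → mm p (k-3) j < (p l:ℕ) → (p l:ℕ) < (p j:ℕ) → False) := by
  classical
  have : Nonempty ↥(Sdata k q) := ⟨⟨q, q_mem_Sdata hq⟩⟩
  obtain ⟨⟨p, hpS⟩, hmax⟩ := Finite.exists_max (fun x : ↥(Sdata k q) => msr x.1)
  obtain ⟨hpbij, hfill⟩ := hpS
  have hmm : ∀ x : ℕ, mm p (k-3) x = mm q (k-3) x :=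
    fun x => mm_eq_of_fill (fun i => (hfill i).1) (fun i => (hfill i).2) x (le_refl _)
  have hhi : ∀ i, Hi k p i ↔ Hi k q i :=
    hi_iff_of_fill (fun i => (hfill i).1) (fun i => (hfill i).2)
  refine ⟨p, hpbij, hhi, fun i hi => (hfill i).1 (fun h => hi ((hhi i).mpr h)), ?_⟩
  intro j l hjl h1 h2
  have hjlne : j ≠ l := Fin.ne_of_val_ne (by omega)
  have hHpj : Hi k p j := by rw [hi_iff]; omega
  have hHpl : Hi k p l := by
    rw [hi_iff]
    have : mm p (k-3) (l : ℕ) ≤ mm p (k-3) (j : ℕ) := mm_anti (by omega)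
    omega
  have hS' : (p ∘ ⇑(Equiv.swap j l)) ∈ Sdata k q := by
    refine swap_mem_Sdata ⟨hpbij, hfill⟩ hjlne ((hhi j).mp hHpj) ((hhi l).mp hHpl) ?_ ?_
    · rw [← hmm]; omega
    · have : mm q (k-3) (l : ℕ) ≤ mm q (k-3) (j : ℕ) := mm_anti (by omega)
      simp only [← hmm] at this ⊢
      omega
  have hlt : msr p < msr (p ∘ ⇑(Equiv.swap j l)) := msr_swap hjl h2
  exact absurd (hmax ⟨_, hS'⟩) (not_le.mpr hlt)

lemma nat_card_eq_rel {α β : Type*} (R : α → β → Prop)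
    (h1 : ∀ a, ∃ b, R a b) (h2 : ∀ b, ∃ a, R a b)
    (h3 : ∀ a b b', R a b → R a b' → b = b')
    (h4 : ∀ a a' b, R a b → R a' b → a = a') : Nat.card α = Nat.card β := by
  have hf : ∀ a, R a (Classical.choose (h1 a)) := fun a => Classical.choose_spec (h1 a)
  apply Nat.card_eq_of_bijective (fun a => Classical.choose (h1 a))
  constructor
  · intro a a' he
    have he' : Classical.choose (h1 a) = Classical.choose (h1 a') := he
    have hx := hf a'
    rw [← he'] at hx
    exact h4 a a' _ (hf a) hx
  · intro b
    obtain ⟨a, ha⟩ := h2 b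
    exact ⟨a, h3 a _ b (hf a) ha⟩

end West

theorem stmt3 (k n : ℕ) (hk : 3 ≤ k) (hn : 0 < n) :
    Nat.card {p : Fin n → Fin n // Function.Bijective p ∧ Avoids p (id : Fin k → Fin k)} =
    Nat.card {p : Fin n → Fin n // Function.Bijective p ∧
      Avoids p ⇑(Equiv.swap (⟨k - 2, by omega⟩ : Fin k) ⟨k - 1, by omega⟩)} := by
  classical
  have hAiff : ∀ p : Fin n → Fin n, Avoids p (id : Fin k → Fin k) ↔
      (∀ j l : Fin n, (j:ℕ) < (l:ℕ) → West.mm p (k-3) j < (p j:ℕ) → (p j:ℕ) < (p l:ℕ) → False) := by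
    intro p
    constructor
    · intro h j l h1 h2 h3
      exact h ((West.containsA_iff hk p).mpr ⟨j, l, h1, h2, h3⟩)
    · intro h hc
      obtain ⟨j, l, h1, h2, h3⟩ := (West.containsA_iff hk p).mp hc
      exact h j l h1 h2 h3
  have hBiff : ∀ p : Fin n → Fin n,
      Avoids p ⇑(Equiv.swap (⟨k - 2, by omega⟩ : Fin k) ⟨k - 1, by omega⟩) ↔
      (∀ j l : Fin n, (j:ℕ) < (l:ℕ) → West.mm p (k-3) j < (p l:ℕ) → (p l:ℕ) < (p j:ℕ) → False) := by
    intro p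
    constructor
    · intro h j l h1 h2 h3
      exact h ((West.containsB_iff hk (by omega) (by omega) p).mpr ⟨j, l, h1, h2, h3⟩)
    · intro h hc
      obtain ⟨j, l, h1, h2, h3⟩ := (West.containsB_iff hk (by omega) (by omega) p).mp hc
      exact h j l h1 h2 h3
  apply West.nat_card_eq_rel
    (fun (a : {p : Fin n → Fin n // Function.Bijective p ∧ Avoids p (id : Fin k → Fin k)})
         (b : {p : Fin n → Fin n // Function.Bijective p ∧
            Avoids p ⇑(Equiv.swap (⟨k - 2, by omega⟩ : Fin k) ⟨k - 1, by omega⟩)}) =>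
      (∀ i, West.Hi k a.1 i ↔ West.Hi k b.1 i) ∧ (∀ i, ¬ West.Hi k b.1 i → b.1 i = a.1 i))
  · -- existence of B-partner
    intro a
    obtain ⟨p, hbij, hhi, hlow, hpat⟩ := West.exists_Bfill (k := k) a.2.1
    exact ⟨⟨p, hbij, (hBiff p).mpr hpat⟩, fun i => (hhi i).symm, hlow⟩
  · -- existence of A-partner
    intro b
    obtain ⟨p, hbij, hhi, hlow, hpat⟩ := West.exists_Afill (k := k) b.2.1
    refine ⟨⟨p, hbij, (hAiff p).mpr hpat⟩, hhi, fun i hb => ?_⟩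
    exact (hlow i (fun h => hb ((hhi i).mp h))).symm
  · -- uniqueness on B side
    rintro a b b' ⟨hhi, hlow⟩ ⟨hhi', hlow'⟩
    apply Subtype.ext
    refine West.uniqB b.2.1 b'.2.1 (fun i => Iff.trans ((hhi i).symm) (hhi' i)) ?_
      ((hBiff b.1).mp b.2.2) ((hBiff b'.1).mp b'.2.2)
    intro i hi
    have hi' : ¬ West.Hi k b'.1 i := fun h => hi ((hhi i).mp ((hhi' i).mpr h))
    rw [hlow i hi, hlow' i hi']
  · -- uniqueness on A side
    rintro a a' b ⟨hhi, hlow⟩ ⟨hhi', hlow'⟩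
    apply Subtype.ext
    refine West.uniqA a.2.1 a'.2.1 (fun i => Iff.trans (hhi i) ((hhi' i).symm)) ?_
      ((hAiff a.1).mp a.2.2) ((hAiff a'.1).mp a'.2.2)
    intro i hi
    have hib : ¬ West.Hi k b.1 i := fun h => hi ((hhi i).mpr h)
    rw [← hlow i hib, ← hlow' i hib]
end

section
/- Let n be even and let p be an alternating permutation of length n avoiding the pattern 12⋯k. Then every entry of p of rank k-1 is a peak of p. -/
open Function

lemma rankSet_bdd {n : ℕ} (p : Fin n → Fin n) (i : Fin n) :
    BddAbove {m | ∃ f : Fin m → Fin n, StrictMono f ∧ StrictMono (p ∘ f) ∧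
      ∃ hm : 0 < m, f ⟨m - 1, Nat.sub_lt hm Nat.one_pos⟩ = i} := by
  refine ⟨n, fun m hm => ?_⟩
  obtain ⟨f, hf, -⟩ := hm
  simpa using Fintype.card_le_of_injective f hf.injective

lemma rankSet_mem {n : ℕ} (p : Fin n → Fin n) (i : Fin n) :
    (1 : ℕ) ∈ {m | ∃ f : Fin m → Fin n, StrictMono f ∧ StrictMono (p ∘ f) ∧
      ∃ hm : 0 < m, f ⟨m - 1, Nat.sub_lt hm Nat.one_pos⟩ = i} :=
  ⟨fun _ => i, Subsingleton.strictMono _, Subsingleton.strictMono _, Nat.one_pos, rfl⟩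

lemma rank_mem {n : ℕ} (p : Fin n → Fin n) (i : Fin n) :
    rank p i ∈ {m | ∃ f : Fin m → Fin n, StrictMono f ∧ StrictMono (p ∘ f) ∧
      ∃ hm : 0 < m, f ⟨m - 1, Nat.sub_lt hm Nat.one_pos⟩ = i} :=
  Nat.sSup_mem ⟨1, rankSet_mem p i⟩ (rankSet_bdd p i)

lemma one_le_rank {n : ℕ} (p : Fin n → Fin n) (i : Fin n) : 1 ≤ rank p i :=
  le_csSup (rankSet_bdd p i) (rankSet_mem p i)

lemma extend_chain {n : ℕ} (p : Fin n → Fin n) {i j : Fin n} (hij : i < j) (hpij : p i < p j)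
    {r : ℕ} (f : Fin r → Fin n) (hf : StrictMono f) (hpf : StrictMono (p ∘ f))
    (h0 : 0 < r) (hlast : f ⟨r - 1, Nat.sub_lt h0 Nat.one_pos⟩ = i) :
    ∃ g : Fin (r + 1) → Fin n, StrictMono g ∧ StrictMono (p ∘ g) := by
  refine ⟨fun x => if h : x.1 < r then f ⟨x.1, h⟩ else j, ?_, ?_⟩
  · intro a b hab
    rw [Fin.lt_def] at hab
    by_cases hb : b.1 < r
    · have ha : a.1 < r := by omega
      simp only [dif_pos ha, dif_pos hb]
      exact hf (show (⟨a.1, ha⟩ : Fin r) < ⟨b.1, hb⟩ from hab)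
    · by_cases ha : a.1 < r
      · simp only [dif_pos ha, dif_neg hb]
        refine lt_of_le_of_lt ?_ hij
        rw [← hlast]
        exact hf.monotone (show (⟨a.1, ha⟩ : Fin r) ≤ ⟨r - 1, _⟩ from by
          simp only [Fin.mk_le_mk]; omega)
      · exfalso; have := a.2; have := b.2; omega
  · intro a b hab
    rw [Fin.lt_def] at hab
    by_cases hb : b.1 < r
    · have ha : a.1 < r := by omega
      simp only [comp_apply, dif_pos ha, dif_pos hb]
      exact hpf (show (⟨a.1, ha⟩ : Fin r) < ⟨b.1, hb⟩ from hab)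
    · by_cases ha : a.1 < r
      · simp only [comp_apply, dif_pos ha, dif_neg hb]
        refine lt_of_le_of_lt ?_ hpij
        rw [← hlast]
        exact hpf.monotone (show (⟨a.1, ha⟩ : Fin r) ≤ ⟨r - 1, _⟩ from by
          simp only [Fin.mk_le_mk]; omega)
      · exfalso; have := a.2; have := b.2; omega

lemma contains_of_chain {n k r : ℕ} (p : Fin n → Fin n) (g : Fin r → Fin n)
    (hg : StrictMono g) (hpg : StrictMono (p ∘ g)) (hk : k ≤ r) :
    Contains p (id : Fin k → Fin k) := by
  refine ⟨fun a => g (Fin.castLE hk a), hg.comp (Fin.strictMono_castLE hk), fun a b => ?_⟩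
  constructor
  · intro h
    exact hpg ((Fin.strictMono_castLE hk) (by simpa using h))
  · intro h
    by_contra hab
    simp only [id_eq, not_lt] at hab
    exact absurd h (not_lt.mpr (hpg.monotone ((Fin.strictMono_castLE hk).monotone hab)))

theorem stmt5 (n k : ℕ) (hn : Even n) (p : Fin n → Fin n) (hp : Function.Bijective p)
    (halt : Alternating p) (hav : Avoids p (id : Fin k → Fin k))
    (i : Fin n) (hr : rank p i = k - 1) : IsPeak p i := by
  have hn2 : n % 2 = 0 := Nat.even_iff.mp hn
  have hk2 : 2 ≤ k := by
    have h1 := one_le_rank p i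
    rw [hr] at h1
    omega
  have hodd : i.1 % 2 = 1 := by
    by_contra hev
    have hev : i.1 % 2 = 0 := by omega
    have hin := i.2
    have hi1 : i.1 + 1 < n := by omega
    have hij : i < (⟨i.1 + 1, hi1⟩ : Fin n) := by
      simp [Fin.lt_def]
    have hpij : p i < p ⟨i.1 + 1, hi1⟩ := (halt i.1 hi1).mpr hev
    obtain ⟨f, hf, hpf, h0, hlast⟩ := rank_mem p i
    obtain ⟨g, hg, hpg⟩ := extend_chain p hij hpij f hf hpf h0 hlast
    exact hav (contains_of_chain p g hg hpg (by omega))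
  constructor
  · intro hpos
    have h1 : i.1 - 1 + 1 < n := by omega
    have h2 := (halt (i.1 - 1) h1).mpr (by omega)
    have e1 : (⟨i.1 - 1 + 1, h1⟩ : Fin n) = i := by
      rw [Fin.ext_iff]; simp; omega
    rwa [e1] at h2
  · intro h
    have hnot : ¬ p i < p ⟨i.1 + 1, h⟩ := fun hlt => by
      have := (halt i.1 h).mp hlt
      omega
    have hne : p ⟨i.1 + 1, h⟩ ≠ p i := fun he => by
      have := hp.injective he
      rw [Fin.ext_iff] at this
      simp at this
    exact lt_of_le_of_ne (not_lt.mp hnot) hne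
end

section
/- Let q be an alternating permutation of length n avoiding the pattern 12⋯(k-2)k(k-1). Then every entry of q of rank at least k-1 is a peak of q. -/
open Function

theorem stmt6 (n k : ℕ) (hk : 3 ≤ k) (q : Fin n → Fin n) (hq : Function.Bijective q)
    (halt : Alternating q)
    (hav : Avoids q ⇑(Equiv.swap (⟨k - 2, by omega⟩ : Fin k) ⟨k - 1, by omega⟩))
    (i : Fin n) (hr : k - 1 ≤ rank q i) : IsPeak q i := by
  classical
  have hmem : ∃ f : Fin (rank q i) → Fin n, StrictMono f ∧ StrictMono (q ∘ f) ∧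
      ∃ hm : 0 < rank q i, f ⟨rank q i - 1, Nat.sub_lt hm Nat.one_pos⟩ = i := by
    exact Nat.sSup_mem (s := {m | ∃ f : Fin m → Fin n, StrictMono f ∧ StrictMono (q ∘ f) ∧
        ∃ hm : 0 < m, f ⟨m - 1, Nat.sub_lt hm Nat.one_pos⟩ = i})
      ⟨1, fun _ => i, Subsingleton.strictMono _, Subsingleton.strictMono _, Nat.one_pos, rfl⟩
      ⟨n, fun m hm => by
        obtain ⟨f, hf, -⟩ := hm
        simpa using Fintype.card_le_of_injective f hf.injective⟩
  obtain ⟨f, hf, hqf, hr0, hlast⟩ := hmem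
  have hjr : ∀ j : ℕ, j < k - 2 → j < rank q i := fun j hj => by omega
  have hi0 : 0 < i.1 := by
    have h01 : (⟨0, hr0⟩ : Fin (rank q i)) < ⟨rank q i - 1, Nat.sub_lt hr0 Nat.one_pos⟩ := by
      simp only [Fin.lt_def]; omega
    have h02 : (f ⟨0, hr0⟩).1 < i.1 := by
      have := hf h01; rw [hlast] at this; exact this
    omega
  have hq1 : ∀ (j : ℕ) (hj : j < k - 2), q (f ⟨j, hjr j hj⟩) < q i := by
    intro j hj
    have h1 : (⟨j, hjr j hj⟩ : Fin (rank q i)) < ⟨rank q i - 1, Nat.sub_lt hr0 Nat.one_pos⟩ := by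
      simp only [Fin.lt_def]; omega
    have := hqf h1
    rwa [comp_apply, comp_apply, hlast] at this
  have hidx : ∀ (j : ℕ) (hj : j < k - 2), (f ⟨j, hjr j hj⟩).1 < i.1 := by
    intro j hj
    have h1 : (⟨j, hjr j hj⟩ : Fin (rank q i)) < ⟨rank q i - 1, Nat.sub_lt hr0 Nat.one_pos⟩ := by
      simp only [Fin.lt_def]; omega
    have := hf h1
    rw [hlast] at this
    exact this
  -- the key contradiction
  have key : q i < q ⟨i.1 - 1, lt_of_le_of_lt (Nat.sub_le _ _) i.2⟩ → False := by
    intro hlt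
    have hidx2 : ∀ (j : ℕ) (hj : j < k - 2), (f ⟨j, hjr j hj⟩).1 < i.1 - 1 := by
      intro j hj
      have h1 := hidx j hj
      have h2 := hq1 j hj
      by_contra hcon
      have heq : (f ⟨j, hjr j hj⟩ : Fin n) = ⟨i.1 - 1, lt_of_le_of_lt (Nat.sub_le _ _) i.2⟩ :=
        Fin.ext (show (f ⟨j, hjr j hj⟩).1 = i.1 - 1 by omega)
      rw [heq] at h2
      exact absurd hlt (lt_asymm h2)
    apply hav
    refine ⟨fun a => if h : a.1 < k - 2 then f ⟨a.1, hjr a.1 h⟩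
      else if a.1 = k - 2 then ⟨i.1 - 1, lt_of_le_of_lt (Nat.sub_le _ _) i.2⟩ else i, ?_, ?_⟩
    · intro a b hab
      have hab' : a.1 < b.1 := hab
      have hbk : b.1 < k := b.2
      by_cases ha : a.1 < k - 2
      · by_cases hb : b.1 < k - 2
        · simp only [dif_pos ha, dif_pos hb]
          exact hf (show (⟨a.1, hjr a.1 ha⟩ : Fin (rank q i)) < ⟨b.1, hjr b.1 hb⟩ from hab')
        · by_cases hb2 : b.1 = k - 2
          · simp only [dif_pos ha, dif_neg hb, if_pos hb2]
            exact Fin.lt_def.mpr (show (f ⟨a.1, hjr a.1 ha⟩).1 < i.1 - 1 from hidx2 a.1 ha)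
          · simp only [dif_pos ha, dif_neg hb, if_neg hb2]
            exact Fin.lt_def.mpr (hidx a.1 ha)
      · have ha2 : a.1 = k - 2 := by omega
        have hb : ¬ b.1 < k - 2 := by omega
        have hb2 : ¬ b.1 = k - 2 := by omega
        simp only [dif_neg ha, dif_neg hb, if_pos ha2, if_neg hb2]
        exact Fin.lt_def.mpr (show i.1 - 1 < i.1 by omega)
    · intro a b
      have hak : a.1 < k := a.2
      have hbk : b.1 < k := b.2
      have hfix : ∀ c : Fin k, c.1 < k - 2 →
          Equiv.swap (⟨k - 2, by omega⟩ : Fin k) ⟨k - 1, by omega⟩ c = c := fun c hc =>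
        Equiv.swap_apply_of_ne_of_ne
          (fun hh => by have h2 : c.1 = k - 2 := congrArg Fin.val hh; omega)
          (fun hh => by have h2 : c.1 = k - 1 := congrArg Fin.val hh; omega)
      have hmid : ∀ c : Fin k, c.1 = k - 2 →
          Equiv.swap (⟨k - 2, by omega⟩ : Fin k) ⟨k - 1, by omega⟩ c
            = ⟨k - 1, by omega⟩ := fun c hc => by
        rw [show c = ⟨k - 2, by omega⟩ from Fin.ext hc]
        exact Equiv.swap_apply_left _ _
      have htop : ∀ c : Fin k, c.1 = k - 1 →
          Equiv.swap (⟨k - 2, by omega⟩ : Fin k) ⟨k - 1, by omega⟩ c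
            = ⟨k - 2, by omega⟩ := fun c hc => by
        rw [show c = ⟨k - 1, by omega⟩ from Fin.ext hc]
        exact Equiv.swap_apply_right _ _
      rcases lt_trichotomy a.1 (k - 2) with ha | ha | ha
      · rcases lt_trichotomy b.1 (k - 2) with hb | hb | hb
        · rw [hfix a ha, hfix b hb]
          simp only [dif_pos ha, dif_pos hb]
          constructor
          · intro h
            exact hqf (show (⟨a.1, hjr a.1 ha⟩ : Fin (rank q i)) < ⟨b.1, hjr b.1 hb⟩
              from Fin.lt_def.mp h)
          · intro h
            exact Fin.lt_def.mpr (Fin.lt_def.mp (hqf.lt_iff_lt.mp h))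
        · rw [hfix a ha, hmid b hb]
          simp only [dif_pos ha, dif_neg (show ¬ b.1 < k - 2 by omega), if_pos hb]
          exact iff_of_true (Fin.lt_def.mpr (show a.1 < k - 1 by omega))
            (lt_trans (hq1 a.1 ha) hlt)
        · have hb1 : b.1 = k - 1 := by omega
          rw [hfix a ha, htop b hb1]
          simp only [dif_pos ha, dif_neg (show ¬ b.1 < k - 2 by omega),
            if_neg (show ¬ b.1 = k - 2 by omega)]
          exact iff_of_true (Fin.lt_def.mpr (show a.1 < k - 2 by omega)) (hq1 a.1 ha)
      · rcases lt_trichotomy b.1 (k - 2) with hb | hb | hb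
        · rw [hmid a ha, hfix b hb]
          simp only [dif_neg (show ¬ a.1 < k - 2 by omega), if_pos ha, dif_pos hb]
          exact iff_of_false (fun hcon => by
              have : (k : ℕ) - 1 < b.1 := Fin.lt_def.mp hcon; omega)
            (not_lt.mpr (le_of_lt (lt_trans (hq1 b.1 hb) hlt)))
        · rw [hmid a ha, hmid b hb]
          simp only [dif_neg (show ¬ a.1 < k - 2 by omega), if_pos ha,
            dif_neg (show ¬ b.1 < k - 2 by omega), if_pos hb]
          exact iff_of_false (lt_irrefl _) (lt_irrefl _)
        · have hb1 : b.1 = k - 1 := by omega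
          rw [hmid a ha, htop b hb1]
          simp only [dif_neg (show ¬ a.1 < k - 2 by omega), if_pos ha,
            dif_neg (show ¬ b.1 < k - 2 by omega), if_neg (show ¬ b.1 = k - 2 by omega)]
          exact iff_of_false (fun hcon => by
              have : (k : ℕ) - 1 < k - 2 := Fin.lt_def.mp hcon; omega)
            (not_lt.mpr (le_of_lt hlt))
      · have ha1 : a.1 = k - 1 := by omega
        rcases lt_trichotomy b.1 (k - 2) with hb | hb | hb
        · rw [htop a ha1, hfix b hb]
          simp only [dif_neg (show ¬ a.1 < k - 2 by omega),
            if_neg (show ¬ a.1 = k - 2 by omega), dif_pos hb]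
          exact iff_of_false (fun hcon => by
              have : (k : ℕ) - 2 < b.1 := Fin.lt_def.mp hcon; omega)
            (not_lt.mpr (le_of_lt (hq1 b.1 hb)))
        · rw [htop a ha1, hmid b hb]
          simp only [dif_neg (show ¬ a.1 < k - 2 by omega),
            if_neg (show ¬ a.1 = k - 2 by omega),
            dif_neg (show ¬ b.1 < k - 2 by omega), if_pos hb]
          exact iff_of_true (Fin.lt_def.mpr (show (k : ℕ) - 2 < k - 1 by omega)) hlt
        · have hb1 : b.1 = k - 1 := by omega
          rw [htop a ha1, htop b hb1]
          simp only [dif_neg (show ¬ a.1 < k - 2 by omega),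
            if_neg (show ¬ a.1 = k - 2 by omega),
            dif_neg (show ¬ b.1 < k - 2 by omega), if_neg (show ¬ b.1 = k - 2 by omega)]
          exact iff_of_false (lt_irrefl _) (lt_irrefl _)
  -- conclude IsPeak
  have hleft : q ⟨i.1 - 1, lt_of_le_of_lt (Nat.sub_le _ _) i.2⟩ < q i := by
    rcases lt_trichotomy (q ⟨i.1 - 1, lt_of_le_of_lt (Nat.sub_le _ _) i.2⟩) (q i) with h | h | h
    · exact h
    · exfalso
      have h2 : i.1 - 1 = i.1 := congrArg Fin.val (hq.1 h)
      omega
    · exact absurd h key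
  constructor
  · intro _; exact hleft
  · intro h
    have h1 : i.1 - 1 + 1 < n := by omega
    have h2 := (halt (i.1 - 1) h1).mp (by
      have heq : (⟨i.1 - 1 + 1, h1⟩ : Fin n) = i := Fin.ext (show i.1 - 1 + 1 = i.1 by omega)
      rw [heq]; exact hleft)
    have h3 := halt i.1 h
    have h4 : ¬ q ⟨i.1, by omega⟩ < q ⟨i.1 + 1, h⟩ := by
      rw [h3]; omega
    have h5 : (⟨i.1, by omega⟩ : Fin n) = i := Fin.ext rfl
    rw [h5] at h4
    rcases lt_trichotomy (q ⟨i.1 + 1, h⟩) (q i) with h6 | h6 | h6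
    · exact h6
    · exfalso
      have h7 : i.1 + 1 = i.1 := congrArg Fin.val (hq.1 h6)
      omega
    · exact absurd h6 h4
end

section
/- Let p be an alternating permutation (of any length n) avoiding the pattern 12⋯k. Then every entry of p of co-rank k-1 is a valley of p. -/
open Function

/-- Any member of the corank set is below `k` when `p` avoids `id : Fin k → Fin k`. -/
lemma mem_corank_lt {n k : ℕ} {p : Fin n → Fin n}
    (hav : Avoids p (id : Fin k → Fin k)) {i : Fin n} {m : ℕ}
    (hm : m ∈ {m | ∃ f : Fin m → Fin n, StrictMono f ∧ StrictMono (p ∘ f) ∧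
      ∃ hm : 0 < m, f ⟨0, hm⟩ = i}) : m < k := by
  obtain ⟨f, hf, hpf, -, -⟩ := hm
  by_contra hkm
  push_neg at hkm
  exact hav ⟨f ∘ Fin.castLE hkm,
    hf.comp (Fin.strictMono_castLE hkm),
    fun a b => by
      constructor
      · intro h
        exact hpf (by simpa using h)
      · intro h
        simpa using (hpf.comp (Fin.strictMono_castLE hkm)).lt_iff_lt.mp h⟩

theorem stmt7 (n k : ℕ) (p : Fin n → Fin n) (hp : Function.Bijective p)
    (halt : Alternating p) (hav : Avoids p (id : Fin k → Fin k))
    (i : Fin n) (hr : corank p i = k - 1) : IsValley p i := by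
  set S : Fin n → Set ℕ := fun j => {m | ∃ f : Fin m → Fin n, StrictMono f ∧ StrictMono (p ∘ f) ∧
      ∃ hm : 0 < m, f ⟨0, hm⟩ = j} with hS
  have hone : ∀ j : Fin n, 1 ∈ S j := by
    intro j
    refine ⟨fun _ => j, ?_, ?_, Nat.one_pos, rfl⟩ <;>
      · intro a b hab
        omega
  have hbdd : ∀ j : Fin n, BddAbove (S j) := fun j =>
    ⟨k, fun m hm => le_of_lt (mem_corank_lt hav hm)⟩
  have hmem : ∀ j : Fin n, sSup (S j) ∈ S j := fun j =>
    Nat.sSup_mem ⟨1, hone j⟩ (hbdd j)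
  have hcor : ∀ j : Fin n, corank p j = sSup (S j) := fun j => rfl
  have hk1 : 1 ≤ k - 1 := by
    have := le_csSup (hbdd i) (hone i)
    rw [← hcor i, hr] at this
    exact this
  have hk2 : 2 ≤ k := by omega
  -- i has even index
  have heven : i.1 % 2 = 0 := by
    by_contra hodd
    have hi0 : 0 < i.1 := by omega
    have hlt : i.1 - 1 + 1 < n := by omega
    set j : Fin n := ⟨i.1 - 1, lt_of_le_of_lt (Nat.sub_le _ _) i.2⟩ with hj
    have hie : (⟨i.1 - 1 + 1, hlt⟩ : Fin n) = i := Fin.ext (show i.1 - 1 + 1 = i.1 by omega)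
    have hji : p j < p i := by
      have := (halt (i.1 - 1) hlt).mpr (by omega)
      rwa [hie] at this
    have hjilt : j < i := by
      rw [Fin.lt_def]
      show i.1 - 1 < i.1
      omega
    -- get a maximal increasing subsequence starting at i
    have hmemi := hmem i
    rw [← hcor i, hr] at hmemi
    obtain ⟨f, hf, hpf, hm, hf0⟩ := hmemi
    -- prepend j
    set g : Fin (k - 1 + 1) → Fin n :=
      fun t => if h : t.1 = 0 then j else f ⟨t.1 - 1, by omega⟩ with hg
    have hg0 : ∀ (t : Fin (k - 1 + 1)) (h : t.1 = 0), g t = j := by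
      intro t h
      simp only [hg]
      rw [dif_pos h]
    have hgs : ∀ (t : Fin (k - 1 + 1)) (h : ¬ t.1 = 0), g t = f ⟨t.1 - 1, by omega⟩ := by
      intro t h
      simp only [hg]
      rw [dif_neg h]
    have key : ∀ a b : Fin (k - 1 + 1), a < b → g a < g b ∧ p (g a) < p (g b) := by
      intro a b hab
      rw [Fin.lt_def] at hab
      have hb : ¬ b.1 = 0 := by omega
      rw [hgs b hb]
      by_cases ha : a.1 = 0
      · rw [hg0 a ha]
        have h0le : (⟨0, hm⟩ : Fin (k - 1)) ≤ ⟨b.1 - 1, by omega⟩ := by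
          rw [Fin.le_def]; exact Nat.zero_le _
        have h2 := hf.monotone h0le
        rw [hf0] at h2
        have h3 := hpf.monotone h0le
        simp only [Function.comp_apply, hf0] at h3
        exact ⟨lt_of_lt_of_le hjilt h2, lt_of_lt_of_le hji h3⟩
      · rw [hgs a ha]
        have hlt' : (⟨a.1 - 1, by omega⟩ : Fin (k - 1)) < ⟨b.1 - 1, by omega⟩ := by
          rw [Fin.lt_def]; show a.1 - 1 < b.1 - 1; omega
        exact ⟨hf hlt', hpf hlt'⟩
    have hnew : (k - 1) + 1 ∈ S j := by
      refine ⟨g, fun a b hab => (key a b hab).1, fun a b hab => (key a b hab).2,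
        Nat.succ_pos _, hg0 _ rfl⟩
    have := mem_corank_lt hav hnew
    omega
  constructor
  · intro h0
    have h1 : i.1 - 1 + 1 < n := by omega
    have hie : (⟨i.1 - 1 + 1, h1⟩ : Fin n) = i := Fin.ext (show i.1 - 1 + 1 = i.1 by omega)
    have hne : p ⟨i.1 - 1, lt_of_le_of_lt (Nat.sub_le _ _) i.2⟩ ≠ p i := by
      intro h
      have h2 := congrArg Fin.val (hp.1 h)
      simp only at h2
      omega
    have hnlt := halt (i.1 - 1) h1
    rw [hie] at hnlt
    have hno : ¬ p ⟨i.1 - 1, _⟩ < p i := fun h => by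
      have := hnlt.mp h
      omega
    exact lt_of_le_of_ne (not_lt.mp hno) hne.symm
  · intro h
    exact (halt i.1 h).mpr heven
end

section
/- For every positive integer n, the number of alternating permutations of length 2n avoiding 1234 equals the number of alternating permutations of length 2n avoiding 1243. -/
open Function

namespace Lewis

variable {m : ℕ}


variable {m : ℕ}

/-- Cell `(t,v)` is dominated: some increasing pair before `t` lies below `v`. -/
def Dom (p : Fin m → Fin m) (t v : Fin m) : Prop :=
  ∃ a b : Fin m, a < b ∧ b < t ∧ p a < p b ∧ p b < v

/-- Entry at `i` has rank ≥ 3. -/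
def Big (p : Fin m → Fin m) (i : Fin m) : Prop := Dom p i (p i)

lemma dom_mono {p : Fin m → Fin m} {t v t' v' : Fin m} (h : Dom p t v)
    (ht : t ≤ t') (hv : v ≤ v') : Dom p t' v' := by
  obtain ⟨a, b, hab, hbt, h1, h2⟩ := h
  exact ⟨a, b, hab, lt_of_lt_of_le hbt ht, h1, lt_of_lt_of_le h2 hv⟩

/-- Witnesses of domination can be chosen non-big. -/
lemma dom_min_wit {p : Fin m → Fin m} {t v : Fin m} (h : Dom p t v) :
    ∃ a b : Fin m, a < b ∧ b < t ∧ p a < p b ∧ p b < v ∧ ¬ Big p a ∧ ¬ Big p b := by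
  classical
  set S : Finset (Fin m) :=
    Finset.univ.filter (fun b => ∃ a, a < b ∧ b < t ∧ p a < p b ∧ p b < v) with hS
  have hne : S.Nonempty := by
    obtain ⟨a, b, hab, hbt, h1, h2⟩ := h
    exact ⟨b, by simp [hS]; exact ⟨a, hab, hbt, h1, h2⟩⟩
  obtain ⟨b₀, hb₀S, hmin⟩ := Finset.exists_min_image S (fun b => p b) hne
  have hb₀ : ∃ a, a < b₀ ∧ b₀ < t ∧ p a < p b₀ ∧ p b₀ < v := by
    simpa [hS] using hb₀S
  obtain ⟨a₀, ha₀, hbt, h1, h2⟩ := hb₀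
  have hnb : ¬ Big p b₀ := by
    rintro ⟨a', b', hab', hb'b, g1, g2⟩
    have hb'S : b' ∈ S := by
      simp only [hS, Finset.mem_filter, Finset.mem_univ, true_and]
      exact ⟨a', hab', lt_trans hb'b hbt, g1, lt_trans g2 h2⟩
    exact absurd (hmin b' hb'S) (not_le.mpr g2)
  have hna : ¬ Big p a₀ := by
    rintro ⟨a'', b'', hab'', hb''a, g1, g2⟩
    have hb''S : b'' ∈ S := by
      simp only [hS, Finset.mem_filter, Finset.mem_univ, true_and]
      exact ⟨a'', hab'', lt_trans (lt_trans hb''a ha₀) hbt, g1,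
        lt_trans g2 (lt_trans h1 h2)⟩
    exact absurd (hmin b'' hb''S) (not_le.mpr (lt_trans g2 h1))
  exact ⟨a₀, b₀, ha₀, hbt, h1, h2, hna, hnb⟩

lemma contains1234_iff {p : Fin m → Fin m} :
    Contains p ![0, 1, 2, 3] ↔ ∃ c d : Fin m, c < d ∧ Big p c ∧ p c < p d := by
  constructor
  · rintro ⟨f, hf, hiff⟩
    refine ⟨f 2, f 3, hf (by decide), ⟨f 0, f 1, hf (by decide), hf (by decide),
      (hiff 0 1).mp (by decide), (hiff 1 2).mp (by decide)⟩, (hiff 2 3).mp (by decide)⟩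
  · rintro ⟨c, d, hcd, ⟨a, b, hab, hbc, h1, h2⟩, h3⟩
    have hac : a < c := lt_trans hab hbc
    have h4 : p a < p c := lt_trans h1 h2
    have h5 : p a < p d := lt_trans h4 h3
    have h6 : p b < p d := lt_trans h2 h3
    refine ⟨![a, b, c, d], ?_, ?_⟩
    · intro i j hij
      fin_cases i <;> fin_cases j <;>
        first
          | exact absurd hij (by decide)
          | exact hab | exact hbc | exact hcd | exact hac
          | exact lt_trans hab (lt_trans hbc hcd)
          | exact lt_trans hbc hcd
    · intro i j
      fin_cases i <;> fin_cases j <;>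
        first
          | exact iff_of_false (by decide) (lt_irrefl _)
          | exact iff_of_true (by decide) h1
          | exact iff_of_true (by decide) h2
          | exact iff_of_true (by decide) h3
          | exact iff_of_true (by decide) h4
          | exact iff_of_true (by decide) h5
          | exact iff_of_true (by decide) h6
          | exact iff_of_false (by decide) (lt_asymm h1)
          | exact iff_of_false (by decide) (lt_asymm h2)
          | exact iff_of_false (by decide) (lt_asymm h3)
          | exact iff_of_false (by decide) (lt_asymm h4)
          | exact iff_of_false (by decide) (lt_asymm h5)
          | exact iff_of_false (by decide) (lt_asymm h6)

lemma contains1243_iff {p : Fin m → Fin m} :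
    Contains p ![0, 1, 3, 2] ↔ ∃ c d : Fin m, c < d ∧ p d < p c ∧ Dom p c (p d) := by
  constructor
  · rintro ⟨f, hf, hiff⟩
    refine ⟨f 2, f 3, hf (by decide), (hiff 3 2).mp (by decide),
      ⟨f 0, f 1, hf (by decide), hf (by decide),
        (hiff 0 1).mp (by decide), (hiff 1 3).mp (by decide)⟩⟩
  · rintro ⟨c, d, hcd, h3, a, b, hab, hbc, h1, h2⟩
    -- values : p a < p b < p d < p c ; positions a < b < c < d
    have hac : a < c := lt_trans hab hbc
    have h4 : p b < p c := lt_trans h2 h3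
    have h5 : p a < p d := lt_trans h1 h2
    have h6 : p a < p c := lt_trans h5 h3
    refine ⟨![a, b, c, d], ?_, ?_⟩
    · intro i j hij
      fin_cases i <;> fin_cases j <;>
        first
          | exact absurd hij (by decide)
          | exact hab | exact hbc | exact hcd | exact hac
          | exact lt_trans hab (lt_trans hbc hcd)
          | exact lt_trans hbc hcd
    · intro i j
      fin_cases i <;> fin_cases j <;>
        first
          | exact iff_of_false (by decide) (lt_irrefl _)
          | exact iff_of_true (by decide) h1
          | exact iff_of_true (by decide) h2
          | exact iff_of_true (by decide) h3
          | exact iff_of_true (by decide) h4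
          | exact iff_of_true (by decide) h5
          | exact iff_of_true (by decide) h6
          | exact iff_of_false (by decide) (lt_asymm h1)
          | exact iff_of_false (by decide) (lt_asymm h2)
          | exact iff_of_false (by decide) (lt_asymm h3)
          | exact iff_of_false (by decide) (lt_asymm h4)
          | exact iff_of_false (by decide) (lt_asymm h5)
          | exact iff_of_false (by decide) (lt_asymm h6)

/-- `q` is a member of the rearrangement class of `p`. -/
def ClassMem (p q : Fin m → Fin m) : Prop :=
  Bijective q ∧ (∀ i, ¬ Big p i → q i = p i) ∧ (∀ i, Big p i → Big q i)

lemma classMem_refl {p : Fin m → Fin m} (hp : Bijective p) : ClassMem p p :=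
  ⟨hp, fun _ _ => rfl, fun _ h => h⟩

lemma classMem_big_iff {p q : Fin m → Fin m} (h : ClassMem p q) (i : Fin m) :
    Big q i ↔ Big p i := by
  refine ⟨fun hq => ?_, h.2.2 i⟩
  by_contra hnp
  obtain ⟨a, b, hab, hbi, h1, h2, hna, hnb⟩ := dom_min_wit hq
  have hpa : ¬ Big p a := fun hh => hna (h.2.2 a hh)
  have hpb : ¬ Big p b := fun hh => hnb (h.2.2 b hh)
  have ea := h.2.1 a hpa
  have eb := h.2.1 b hpb
  have ei := h.2.1 i hnp
  exact hnp ⟨a, b, hab, hbi, by rwa [ea, eb] at h1, by rwa [eb, ei] at h2⟩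

lemma dom_transfer {p q : Fin m → Fin m} (h : ClassMem p q) {t v : Fin m} :
    Dom q t v ↔ Dom p t v := by
  constructor
  · intro hd
    obtain ⟨a, b, hab, hbt, h1, h2, hna, hnb⟩ := dom_min_wit hd
    have hpa : ¬ Big p a := fun hh => hna (h.2.2 a hh)
    have hpb : ¬ Big p b := fun hh => hnb (h.2.2 b hh)
    rw [h.2.1 a hpa] at h1
    rw [h.2.1 b hpb] at h1 h2
    exact ⟨a, b, hab, hbt, h1, h2⟩
  · intro hd
    obtain ⟨a, b, hab, hbt, h1, h2, hna, hnb⟩ := dom_min_wit hd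
    have hqa : q a = p a := h.2.1 a hna
    have hqb : q b = p b := h.2.1 b hnb
    exact ⟨a, b, hab, hbt, by rwa [hqa, hqb], by rwa [hqb]⟩

lemma swap_classMem {p q : Fin m → Fin m} (h : ClassMem p q) {c d : Fin m}
    (hc : Big p c) (hd : Big p d) (hcd : c < d) (hdom : Dom q c (q d)) :
    ClassMem p (q ∘ Equiv.swap c d) := by
  have hqc : Big q c := h.2.2 c hc
  have hqd : Big q d := h.2.2 d hd
  set q' := q ∘ Equiv.swap c d with hq'
  have hne : c ≠ d := ne_of_lt hcd
  have hfix : ∀ j, ¬ Big q j → q' j = q j := by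
    intro j hj
    have hjc : j ≠ c := fun e => hj (e ▸ hqc)
    have hjd : j ≠ d := fun e => hj (e ▸ hqd)
    simp [hq', Equiv.swap_apply_of_ne_of_ne hjc hjd]
  have hq'c : q' c = q d := by simp [hq']
  have hq'd : q' d = q c := by simp [hq']
  refine ⟨h.1.comp (Equiv.swap c d).bijective, ?_, ?_⟩
  · intro i hi
    have hic : i ≠ c := fun e => hi (e ▸ hc)
    have hid : i ≠ d := fun e => hi (e ▸ hd)
    rw [show q' i = q i by simp [hq', Equiv.swap_apply_of_ne_of_ne hic hid]]
    exact h.2.1 i hi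
  · intro i hi
    have hqi : Big q i := h.2.2 i hi
    by_cases hic : i = c
    · subst hic
      obtain ⟨a, b, hab, hbt, h1, h2, hna, hnb⟩ := dom_min_wit hdom
      rw [← hfix a hna] at h1
      rw [← hfix b hnb] at h1 h2
      exact ⟨a, b, hab, hbt, h1, by rwa [hq'c]⟩
    by_cases hid : i = d
    · subst hid
      obtain ⟨a, b, hab, hbt, h1, h2, hna, hnb⟩ := dom_min_wit hqc
      rw [← hfix a hna] at h1
      rw [← hfix b hnb] at h1 h2
      exact ⟨a, b, hab, lt_trans hbt hcd, h1, by rwa [hq'd]⟩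
    · obtain ⟨a, b, hab, hbt, h1, h2, hna, hnb⟩ := dom_min_wit hqi
      rw [← hfix a hna] at h1
      rw [← hfix b hnb] at h1 h2
      have : q' i = q i := by
        simp [hq', Equiv.swap_apply_of_ne_of_ne hic hid]
      exact ⟨a, b, hab, hbt, h1, by rwa [this]⟩

/-- position weight for the lexicographic encoding -/
def wt (m : ℕ) (i : Fin m) : ℕ := (m + 1) ^ (m - 1 - i.1)

def enc (q : Fin m → Fin m) : ℕ := ∑ i : Fin m, (q i).1 * wt m i

lemma wt_lt {c d : Fin m} (hcd : c < d) : wt m d < wt m c := by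
  apply Nat.pow_lt_pow_right (by omega)
  have := d.2
  have := c.2
  omega

lemma enc_split (q : Fin m → Fin m) {c d : Fin m} (hne : c ≠ d) :
    enc q = (q c).1 * wt m c + (q d).1 * wt m d
      + ∑ i ∈ (Finset.univ.erase c).erase d, (q i).1 * wt m i := by
  have hd : d ∈ Finset.univ.erase c := by simp [hne.symm]
  rw [enc, ← Finset.add_sum_erase _ _ (Finset.mem_univ c),
    ← Finset.add_sum_erase _ _ hd, add_assoc]

lemma enc_swap_lt {q : Fin m → Fin m} {c d : Fin m} (hcd : c < d)
    (hv : q d < q c) : enc (q ∘ Equiv.swap c d) < enc q := by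
  have hne : c ≠ d := ne_of_lt hcd
  set q' := q ∘ Equiv.swap c d with hq'
  have h1 : q' c = q d := by simp [hq']
  have h2 : q' d = q c := by simp [hq']
  have hrest : ∑ i ∈ (Finset.univ.erase c).erase d, (q' i).1 * wt m i
      = ∑ i ∈ (Finset.univ.erase c).erase d, (q i).1 * wt m i := by
    apply Finset.sum_congr rfl
    intro i hi
    simp only [Finset.mem_erase] at hi
    simp [hq', Equiv.swap_apply_of_ne_of_ne hi.2.1 hi.1]
  rw [enc_split q hne, enc_split q' hne, hrest, h1, h2]
  have hw := wt_lt hcd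
  have hvv : (q d).1 < (q c).1 := hv
  apply Nat.add_lt_add_right
  zify
  nlinarith [hvv, hw]

lemma exists_avoid1243 {p : Fin m → Fin m} (hp : Bijective p) :
    ∃ q : Fin m → Fin m, ClassMem p q ∧ Avoids q ![0, 1, 3, 2] := by
  classical
  set F : Finset (Fin m → Fin m) := Finset.univ.filter (ClassMem p) with hF
  have hmem : ∀ r, r ∈ F ↔ ClassMem p r := by intro r; simp [hF]
  obtain ⟨q, hqF, hqmin⟩ := Finset.exists_min_image F enc ⟨p, (hmem p).mpr (classMem_refl hp)⟩
  refine ⟨q, (hmem q).mp hqF, ?_⟩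
  intro hcon
  obtain ⟨c, d, hcd, hv, hdom⟩ := contains1243_iff.mp hcon
  have hqc : Big q c := dom_mono hdom le_rfl hv.le
  have hqd : Big q d := dom_mono hdom hcd.le le_rfl
  have hcm : ClassMem p q := (hmem q).mp hqF
  have hpc : Big p c := (classMem_big_iff hcm c).mp hqc
  have hpd : Big p d := (classMem_big_iff hcm d).mp hqd
  have hcm' : ClassMem p (q ∘ Equiv.swap c d) := swap_classMem hcm hpc hpd hcd hdom
  have hlt := enc_swap_lt hcd hv
  exact absurd (hqmin _ ((hmem _).mpr hcm')) (not_le.mpr hlt)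

lemma exists_avoid1234 {p : Fin m → Fin m} (hp : Bijective p) :
    ∃ q : Fin m → Fin m, ClassMem p q ∧ Avoids q ![0, 1, 2, 3] := by
  classical
  set F : Finset (Fin m → Fin m) := Finset.univ.filter (ClassMem p) with hF
  have hmem : ∀ r, r ∈ F ↔ ClassMem p r := by intro r; simp [hF]
  obtain ⟨q, hqF, hqmax⟩ := Finset.exists_max_image F enc ⟨p, (hmem p).mpr (classMem_refl hp)⟩
  refine ⟨q, (hmem q).mp hqF, ?_⟩
  intro hcon
  obtain ⟨c, d, hcd, hqc, hv⟩ := contains1234_iff.mp hcon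
  have hqd : Big q d := dom_mono hqc hcd.le hv.le
  have hdom : Dom q c (q d) := dom_mono hqc le_rfl hv.le
  have hcm : ClassMem p q := (hmem q).mp hqF
  have hpc : Big p c := (classMem_big_iff hcm c).mp hqc
  have hpd : Big p d := (classMem_big_iff hcm d).mp hqd
  have hcm' : ClassMem p (q ∘ Equiv.swap c d) := swap_classMem hcm hpc hpd hcd hdom
  set q' := q ∘ Equiv.swap c d with hq'
  have hback : q' ∘ Equiv.swap c d = q := by
    funext x; simp [hq']
  have hv' : q' d < q' c := by
    have h1 : q' c = q d := by simp [hq']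
    have h2 : q' d = q c := by simp [hq']
    rw [h1, h2]; exact hv
  have hlt := enc_swap_lt hcd hv'
  rw [hback] at hlt
  exact absurd (hqmax _ ((hmem _).mpr hcm')) (not_le.mpr hlt)

lemma big_odd_1234 {n : ℕ} {p : Fin (2 * n) → Fin (2 * n)} (halt : Alternating p)
    (hav : Avoids p ![0, 1, 2, 3]) {i : Fin (2 * n)} (hbig : Big p i) : i.1 % 2 = 1 := by
  by_contra hpar
  have hpar0 : i.1 % 2 = 0 := by omega
  have h : i.1 + 1 < 2 * n := by have := i.2; omega
  have hasc : p i < p ⟨i.1 + 1, h⟩ := by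
    have := (halt i.1 h).mpr hpar0
    exact this
  exact hav (contains1234_iff.mpr ⟨i, ⟨i.1 + 1, h⟩, by simp [Fin.lt_def], hbig, hasc⟩)

lemma big_odd_1243 {p : Fin m → Fin m} (hp : Injective p) (halt : Alternating p)
    (hav : Avoids p ![0, 1, 3, 2]) {i : Fin m} (hbig : Big p i) : i.1 % 2 = 1 := by
  by_contra hpar
  obtain ⟨a, b, hab, hbi, h1, h2⟩ := hbig
  have hipos : 0 < i.1 := lt_of_le_of_lt (Nat.zero_le _) hbi
  have hpar0 : i.1 % 2 = 0 := by omega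
  set j : ℕ := i.1 - 1 with hj
  have hjlt : j + 1 < m := by have := i.2; omega
  have hji : (⟨j + 1, hjlt⟩ : Fin m) = i := by ext; simp [hj]; omega
  have hdesc : p i < p ⟨j, by omega⟩ := by
    have hne : p ⟨j, by omega⟩ ≠ p i := by
      intro he
      have := hp he
      have : j = i.1 := congrArg Fin.val this
      omega
    have := (halt j hjlt)
    rw [hji] at this
    have hnlt : ¬ (p ⟨j, by omega⟩ < p i) := by
      intro hh
      have := this.mp hh
      omega
    exact lt_of_le_of_ne (not_lt.mp hnlt) (fun e => hne e.symm)
  have hbj : b < (⟨j, by omega⟩ : Fin m) := by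
    rcases lt_trichotomy b (⟨j, by omega⟩ : Fin m) with hlt | heq | hgt
    · exact hlt
    · exfalso
      rw [heq] at h2
      exact absurd (lt_trans h2 hdesc) (lt_irrefl _)
    · exfalso
      have : b.1 < i.1 := hbi
      have : j < b.1 := hgt
      omega
  apply hav
  refine contains1243_iff.mpr ⟨⟨j, by omega⟩, i, ?_, hdesc, a, b, hab, hbj, h1, h2⟩
  simp [Fin.lt_def]; omega

lemma alt_transfer {p q : Fin m → Fin m} (h : ClassMem p q)
    (hodd : ∀ i, Big p i → i.1 % 2 = 1) (halt : Alternating p) : Alternating q := by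
  intro i hlt
  set x : Fin m := ⟨i, by omega⟩ with hx
  set y : Fin m := ⟨i + 1, hlt⟩ with hy
  have hxy : x < y := by simp [hx, hy, Fin.lt_def]
  have hxyne : x ≠ y := ne_of_lt hxy
  by_cases hpar : i % 2 = 0
  · simp only [hpar, iff_true]
    have hnbx : ¬ Big p x := fun hh => by have := hodd x hh; simp [hx] at this; omega
    have hqx : q x = p x := h.2.1 x hnbx
    by_cases hby : Big p y
    · by_contra hno
      have hne : q y ≠ q x := fun e => hxyne (h.1.1 e).symm
      have hlt2 : q y < q x := lt_of_le_of_ne (not_lt.mp hno) hne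
      obtain ⟨a, b, hab, hby', h1, h2⟩ := h.2.2 y hby
      have hbx : b < x := by
        have hble : b.1 ≤ i := by have : b.1 < i + 1 := hby'; omega
        rcases eq_or_lt_of_le hble with he | hlt3
        · exfalso
          have : b = x := by ext; simpa [hx] using he
          rw [this] at h2
          exact absurd (lt_trans h2 hlt2) (lt_irrefl _)
        · simpa [Fin.lt_def, hx] using hlt3
      have hbigqx : Big q x := ⟨a, b, hab, hbx, h1, lt_trans h2 hlt2⟩
      have := hodd x ((classMem_big_iff h x).mp hbigqx)
      simp [hx] at this; omega
    · rw [hqx, h.2.1 y hby]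
      have := (halt i hlt).mpr hpar
      exact this
  · simp only [hpar, iff_false]
    have hnby : ¬ Big p y := fun hh => by have := hodd y hh; simp [hy] at this; omega
    have hqy : q y = p y := h.2.1 y hnby
    by_cases hbx : Big p x
    · intro hlt2
      have hbigqx : Big q x := h.2.2 x hbx
      have hbigqy : Big q y := dom_mono hbigqx hxy.le hlt2.le
      exact hnby ((classMem_big_iff h y).mp hbigqy)
    · rw [hqy, h.2.1 x hbx]
      intro hh
      have := (halt i hlt).mp hh
      omega

lemma uniq_aux_1234 {p p' : Fin m → Fin m} (hp : Surjective p) (hp' : Injective p')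
    (hav : Avoids p ![0, 1, 2, 3])
    (hagree : ∀ i, ¬ Big p i → p i = p' i) {c : Fin m}
    (hlt : p c < p' c) (hbelow : ∀ i, i < c → p i = p' i) : False := by
  have hbigc : Big p c := by
    by_contra hh
    exact absurd (hagree c hh) (ne_of_lt hlt)
  obtain ⟨e, he⟩ := hp (p' c)
  rcases lt_trichotomy e c with h1 | h1 | h1
  · have := (hbelow e h1).symm.trans he
    exact absurd (hp' this) (ne_of_lt h1)
  · rw [h1] at he
    exact absurd he (ne_of_lt hlt)
  · exact hav (contains1234_iff.mpr ⟨c, e, h1, hbigc, by rw [he]; exact hlt⟩)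

lemma uniq_aux_1243 {p p' : Fin m → Fin m} (cm : ClassMem p' p) (hp' : Injective p')
    (hav : Avoids p ![0, 1, 3, 2]) {c : Fin m}
    (hlt : p' c < p c) (hbelow : ∀ i, i < c → p i = p' i) : False := by
  have hbigc : Big p' c := by
    by_contra hh
    exact absurd (cm.2.1 c hh) (ne_of_gt hlt)
  have hdom : Dom p c (p' c) := (dom_transfer cm).mpr hbigc
  obtain ⟨e, he⟩ := cm.1.2 (p' c)
  rcases lt_trichotomy e c with h1 | h1 | h1
  · have := (hbelow e h1).symm.trans he
    exact absurd (hp' this) (ne_of_lt h1)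
  · rw [h1] at he
    exact absurd he (ne_of_gt hlt)
  · exact hav (contains1243_iff.mpr ⟨c, e, h1, by rw [he]; exact hlt, by rw [he]; exact hdom⟩)

lemma min_diff {p p' : Fin m → Fin m} (hne : p ≠ p') :
    ∃ c : Fin m, p c ≠ p' c ∧ ∀ i, i < c → p i = p' i := by
  classical
  set D : Finset (Fin m) := Finset.univ.filter (fun i => p i ≠ p' i) with hD
  have hDne : D.Nonempty := by
    by_contra hh
    apply hne
    funext i
    by_contra hii
    exact hh ⟨i, by simp [hD, hii]⟩
  obtain ⟨c, hcD, hmin⟩ := Finset.exists_min_image D (fun i => i) hDne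
  refine ⟨c, by simpa [hD] using hcD, fun i hi => ?_⟩
  by_contra hii
  exact absurd (hmin i (by simp [hD, hii])) (not_le.mpr hi)

lemma uniq1234 {p p' : Fin m → Fin m} (hp : Bijective p) (hp' : Bijective p')
    (hbig : ∀ i, Big p i ↔ Big p' i) (hagree : ∀ i, ¬ Big p i → p i = p' i)
    (h1 : Avoids p ![0, 1, 2, 3]) (h2 : Avoids p' ![0, 1, 2, 3]) : p = p' := by
  by_contra hne
  obtain ⟨c, hc, hbelow⟩ := min_diff hne
  rcases lt_trichotomy (p c) (p' c) with hl | hl | hl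
  · exact uniq_aux_1234 hp.2 hp'.1 h1 hagree hl hbelow
  · exact hc hl
  · exact uniq_aux_1234 hp'.2 hp.1 h2
      (fun i hi => (hagree i (fun hh => hi ((hbig i).mp hh))).symm) hl
      (fun i hi => (hbelow i hi).symm)

lemma uniq1243 {p p' : Fin m → Fin m} (hp : Bijective p) (hp' : Bijective p')
    (hbig : ∀ i, Big p i ↔ Big p' i) (hagree : ∀ i, ¬ Big p i → p i = p' i)
    (h1 : Avoids p ![0, 1, 3, 2]) (h2 : Avoids p' ![0, 1, 3, 2]) : p = p' := by
  by_contra hne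
  obtain ⟨c, hc, hbelow⟩ := min_diff hne
  have cm : ClassMem p' p :=
    ⟨hp, fun i hi => hagree i (fun hh => hi ((hbig i).mp hh)),
      fun i hi => (hbig i).mpr hi⟩
  have cm' : ClassMem p p' :=
    ⟨hp', fun i hi => (hagree i hi).symm, fun i hi => (hbig i).mp hi⟩
  rcases lt_trichotomy (p c) (p' c) with hl | hl | hl
  · exact uniq_aux_1243 cm' hp.1 h2 hl (fun i hi => (hbelow i hi).symm)
  · exact hc hl
  · exact uniq_aux_1243 cm hp'.1 h1 hl hbelow

theorem main (n : ℕ) :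
    Nat.card {p : Fin (2 * n) → Fin (2 * n) // Function.Bijective p ∧ Alternating p ∧
      Avoids p (![0, 1, 2, 3] : Fin 4 → Fin 4)} =
    Nat.card {p : Fin (2 * n) → Fin (2 * n) // Function.Bijective p ∧ Alternating p ∧
      Avoids p (![0, 1, 3, 2] : Fin 4 → Fin 4)} := by
  classical
  set A := {p : Fin (2 * n) → Fin (2 * n) // Function.Bijective p ∧ Alternating p ∧
      Avoids p (![0, 1, 2, 3] : Fin 4 → Fin 4)} with hA
  set B := {p : Fin (2 * n) → Fin (2 * n) // Function.Bijective p ∧ Alternating p ∧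
      Avoids p (![0, 1, 3, 2] : Fin 4 → Fin 4)} with hB
  have h1 : ∀ x : A, ∃ y : B, ClassMem x.1 y.1 := by
    rintro ⟨p, hbij, halt, hav⟩
    obtain ⟨q, hcm, hqav⟩ := exists_avoid1243 hbij
    have hodd : ∀ i, Big p i → i.1 % 2 = 1 := fun i hi => big_odd_1234 halt hav hi
    exact ⟨⟨q, hcm.1, alt_transfer hcm hodd halt, hqav⟩, hcm⟩
  have h2 : ∀ y : B, ∃ x : A, ClassMem y.1 x.1 := by
    rintro ⟨p, hbij, halt, hav⟩
    obtain ⟨q, hcm, hqav⟩ := exists_avoid1234 hbij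
    have hodd : ∀ i, Big p i → i.1 % 2 = 1 := fun i hi => big_odd_1243 hbij.1 halt hav hi
    exact ⟨⟨q, hcm.1, alt_transfer hcm hodd halt, hqav⟩, hcm⟩
  choose f hf using h1
  choose g hg using h2
  have hfinj : Injective f := by
    intro x x' he
    have c1 := hf x
    have c2 := hf x'
    rw [he] at c1
    have hbig : ∀ i, Big x.1 i ↔ Big x'.1 i := by
      intro i
      rw [← classMem_big_iff c1 i, classMem_big_iff c2 i]
    have hagree : ∀ i, ¬ Big x.1 i → x.1 i = x'.1 i := by
      intro i hi
      rw [← c1.2.1 i hi, c2.2.1 i (fun hh => hi ((hbig i).mpr hh))]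
    exact Subtype.ext (uniq1234 x.2.1 x'.2.1 hbig hagree x.2.2.2 x'.2.2.2)
  have hginj : Injective g := by
    intro y y' he
    have c1 := hg y
    have c2 := hg y'
    rw [he] at c1
    have hbig : ∀ i, Big y.1 i ↔ Big y'.1 i := by
      intro i
      rw [← classMem_big_iff c1 i, classMem_big_iff c2 i]
    have hagree : ∀ i, ¬ Big y.1 i → y.1 i = y'.1 i := by
      intro i hi
      rw [← c1.2.1 i hi, c2.2.1 i (fun hh => hi ((hbig i).mpr hh))]
    exact Subtype.ext (uniq1243 y.2.1 y'.2.1 hbig hagree y.2.2.2 y'.2.2.2)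
  exact le_antisymm (Nat.card_le_card_of_injective f hfinj)
    (Nat.card_le_card_of_injective g hginj)


end Lewis

theorem stmt9 (n : ℕ) (hn : 0 < n) :
    Nat.card {p : Fin (2 * n) → Fin (2 * n) // Function.Bijective p ∧ Alternating p ∧
      Avoids p (![0, 1, 2, 3] : Fin 4 → Fin 4)} =
    Nat.card {p : Fin (2 * n) → Fin (2 * n) // Function.Bijective p ∧ Alternating p ∧
      Avoids p (![0, 1, 3, 2] : Fin 4 → Fin 4)} := Lewis.main n
end
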